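/- arXiv:2603.23216 — 5 statements merged into one kernel-verified Lean document; each statement's English description precedes it below -/
import Mathlib

section
/- Let P be a polygon and let C and C' be maximal horizontal corridors of P. Then either C = C' or the interiors of C and C' are disjoint. The same statement holds for maximal vertical corridors of P. -/
open Set

/-- A polygon (possibly with holes): a compact set with nonempty interior that
equals the closure of its interior and whose frontier is a finite union of segments. -/
def IsPolygon (P : Set (ℝ × ℝ)) : Prop :=
  IsCompact P ∧ (interior P).Nonempty ∧ P = closure (interior P) ∧
    ∃ (n : ℕ) (f g : Fin n → ℝ × ℝ), frontier P = ⋃ i, segment ℝ (f i) (g i)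

/-- A nondegenerate line segment. -/
def IsSeg (E : Set (ℝ × ℝ)) : Prop :=
  ∃ x y : ℝ × ℝ, x ≠ y ∧ E = segment ℝ x y

/-- An edge of `P`: a maximal line segment contained in the frontier of `P`. -/
def IsEdge (P E : Set (ℝ × ℝ)) : Prop :=
  IsSeg E ∧ E ⊆ frontier P ∧
    ∀ E', IsSeg E' → E' ⊆ frontier P → E ⊆ E' → E' = E

/-- A horizontal corridor of `P`: a convex quadrilateral `C ⊆ P` with two vertical sides
whose other two sides are each contained in an edge of `P`. -/
def IsHCorridor (P C : Set (ℝ × ℝ)) : Prop :=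
  ∃ x₁ x₂ y₁ y₂ y₃ y₄ : ℝ, x₁ < x₂ ∧ y₁ < y₂ ∧ y₃ < y₄ ∧
    C = convexHull ℝ ({(x₁, y₁), (x₁, y₂), (x₂, y₃), (x₂, y₄)} : Set (ℝ × ℝ)) ∧
    C ⊆ P ∧
    (∃ E, IsEdge P E ∧ segment ℝ (x₁, y₁) (x₂, y₃) ⊆ E) ∧
    (∃ E, IsEdge P E ∧ segment ℝ (x₁, y₂) (x₂, y₄) ⊆ E)

/-- A vertical corridor of `P`: a convex quadrilateral `C ⊆ P` with two horizontal sides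
whose other two sides are each contained in an edge of `P`. -/
def IsVCorridor (P C : Set (ℝ × ℝ)) : Prop :=
  ∃ y₁ y₂ x₁ x₂ x₃ x₄ : ℝ, y₁ < y₂ ∧ x₁ < x₂ ∧ x₃ < x₄ ∧
    C = convexHull ℝ ({(x₁, y₁), (x₂, y₁), (x₃, y₂), (x₄, y₂)} : Set (ℝ × ℝ)) ∧
    C ⊆ P ∧
    (∃ E, IsEdge P E ∧ segment ℝ (x₁, y₁) (x₃, y₂) ⊆ E) ∧
    (∃ E, IsEdge P E ∧ segment ℝ (x₂, y₁) (x₄, y₂) ⊆ E)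

/-- A maximal horizontal corridor: one not strictly contained in any other horizontal
corridor. -/
def IsMaxHCorridor (P C : Set (ℝ × ℝ)) : Prop :=
  IsHCorridor P C ∧ ∀ C', IsHCorridor P C' → C ⊆ C' → C' = C

/-- A maximal vertical corridor: one not strictly contained in any other vertical
corridor. -/
def IsMaxVCorridor (P C : Set (ℝ × ℝ)) : Prop :=
  IsVCorridor P C ∧ ∀ C', IsVCorridor P C' → C ⊆ C' → C' = C
namespace CorridorAux

open Set

/-- The trapezoid with vertical sides at `x = a, b` and slanted sides on the lines
`y = α + β x` and `y = γ + δ x`. -/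
def Trap (a b α β γ δ : ℝ) : Set (ℝ × ℝ) :=
  {p | a ≤ p.1 ∧ p.1 ≤ b ∧ α + β * p.1 ≤ p.2 ∧ p.2 ≤ γ + δ * p.1}

/-- The "open" trapezoid. -/
def STrap (a b α β γ δ : ℝ) : Set (ℝ × ℝ) :=
  {p | a < p.1 ∧ p.1 < b ∧ α + β * p.1 < p.2 ∧ p.2 < γ + δ * p.1}

lemma convex_trap (a b α β γ δ : ℝ) : Convex ℝ (Trap a b α β γ δ) := by
  rintro p ⟨h1, h2, h3, h4⟩ q ⟨h1', h2', h3', h4'⟩ s t hs ht hst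
  obtain rfl : t = 1 - s := by linarith
  refine ⟨?_, ?_, ?_, ?_⟩ <;>
    simp only [Prod.fst_add, Prod.snd_add, Prod.smul_fst, Prod.smul_snd, smul_eq_mul] <;>
    nlinarith [mul_le_mul_of_nonneg_left h1 hs, mul_le_mul_of_nonneg_left h1' ht,
      mul_le_mul_of_nonneg_left h2 hs, mul_le_mul_of_nonneg_left h2' ht,
      mul_le_mul_of_nonneg_left h3 hs, mul_le_mul_of_nonneg_left h3' ht,
      mul_le_mul_of_nonneg_left h4 hs, mul_le_mul_of_nonneg_left h4' ht]

lemma hull_trap {a b : ℝ} (α β γ δ : ℝ) (hab : a < b) (h1 : α + β * a ≤ γ + δ * a)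
    (h2 : α + β * b ≤ γ + δ * b) :
    convexHull ℝ ({(a, α + β * a), (a, γ + δ * a), (b, α + β * b), (b, γ + δ * b)} :
      Set (ℝ × ℝ)) = Trap a b α β γ δ := by
  apply le_antisymm
  · apply convexHull_min _ (convex_trap a b α β γ δ)
    rintro p (rfl | rfl | rfl | rfl) <;>
      exact ⟨by simp [le_of_lt hab], by simp [le_of_lt hab], by simp [h1, h2], by simp [h1, h2]⟩
  · rintro p ⟨hp1, hp2, hp3, hp4⟩
    have hba : (0:ℝ) < b - a := by linarith
    set t : ℝ := (p.1 - a) / (b - a) with ht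
    have ht0 : 0 ≤ t := div_nonneg (by linarith) (le_of_lt hba)
    have ht1 : t ≤ 1 := by
      rw [div_le_one hba]; linarith
    have hv1 : ((a, α + β * a) : ℝ × ℝ) ∈ convexHull ℝ
        ({(a, α + β * a), (a, γ + δ * a), (b, α + β * b), (b, γ + δ * b)} : Set (ℝ × ℝ)) :=
      subset_convexHull ℝ _ (by simp)
    have hv2 : ((a, γ + δ * a) : ℝ × ℝ) ∈ convexHull ℝ
        ({(a, α + β * a), (a, γ + δ * a), (b, α + β * b), (b, γ + δ * b)} : Set (ℝ × ℝ)) :=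
      subset_convexHull ℝ _ (by simp)
    have hv3 : ((b, α + β * b) : ℝ × ℝ) ∈ convexHull ℝ
        ({(a, α + β * a), (a, γ + δ * a), (b, α + β * b), (b, γ + δ * b)} : Set (ℝ × ℝ)) :=
      subset_convexHull ℝ _ (by simp)
    have hv4 : ((b, γ + δ * b) : ℝ × ℝ) ∈ convexHull ℝ
        ({(a, α + β * a), (a, γ + δ * a), (b, α + β * b), (b, γ + δ * b)} : Set (ℝ × ℝ)) :=
      subset_convexHull ℝ _ (by simp)
    have hK := convex_convexHull ℝ
        ({(a, α + β * a), (a, γ + δ * a), (b, α + β * b), (b, γ + δ * b)} : Set (ℝ × ℝ))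
    have hcomb : t * (b - a) = p.1 - a := by
      rw [ht]; field_simp
    have hpb : ((p.1, α + β * p.1) : ℝ × ℝ) ∈ convexHull ℝ
        ({(a, α + β * a), (a, γ + δ * a), (b, α + β * b), (b, γ + δ * b)} : Set (ℝ × ℝ)) := by
      have := hK hv1 hv3 (by linarith : (0:ℝ) ≤ 1 - t) ht0 (by ring)
      convert this using 1
      have hfst : (1 - t) * a + t * b = p.1 := by linear_combination hcomb
      have hsnd : (1 - t) * (α + β * a) + t * (α + β * b) = α + β * p.1 := by
        linear_combination β * hcomb
      simp only [Prod.ext_iff, Prod.fst_add, Prod.snd_add, Prod.smul_fst, Prod.smul_snd,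
        smul_eq_mul]
      exact ⟨hfst.symm, hsnd.symm⟩
    have hpt : ((p.1, γ + δ * p.1) : ℝ × ℝ) ∈ convexHull ℝ
        ({(a, α + β * a), (a, γ + δ * a), (b, α + β * b), (b, γ + δ * b)} : Set (ℝ × ℝ)) := by
      have := hK hv2 hv4 (by linarith : (0:ℝ) ≤ 1 - t) ht0 (by ring)
      convert this using 1
      have hfst : (1 - t) * a + t * b = p.1 := by linear_combination hcomb
      have hsnd : (1 - t) * (γ + δ * a) + t * (γ + δ * b) = γ + δ * p.1 := by
        linear_combination δ * hcomb
      simp only [Prod.ext_iff, Prod.fst_add, Prod.snd_add, Prod.smul_fst, Prod.smul_snd,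
        smul_eq_mul]
      exact ⟨hfst.symm, hsnd.symm⟩
    rcases eq_or_lt_of_le (le_trans hp3 hp4) with heq | hlt
    · have : p = (p.1, α + β * p.1) := by
        have : p.2 = α + β * p.1 := le_antisymm (by rw [heq]; exact hp4) hp3
        exact Prod.ext rfl this
      rw [this]; exact hpb
    · set s : ℝ := (p.2 - (α + β * p.1)) / ((γ + δ * p.1) - (α + β * p.1)) with hsdef
      have hd : (0:ℝ) < (γ + δ * p.1) - (α + β * p.1) := by linarith
      have hs0 : 0 ≤ s := div_nonneg (by linarith) (le_of_lt hd)
      have hs1 : s ≤ 1 := by rw [div_le_one hd]; linarith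
      have := hK hpb hpt (by linarith : (0:ℝ) ≤ 1 - s) hs0 (by ring)
      convert this using 1
      have hcomb2 : s * ((γ + δ * p.1) - (α + β * p.1)) = p.2 - (α + β * p.1) := by
        rw [hsdef]; exact div_mul_cancel₀ _ hd.ne'
      have hfst : (1 - s) * p.1 + s * p.1 = p.1 := by ring
      have hsnd : (1 - s) * (α + β * p.1) + s * (γ + δ * p.1) = p.2 := by
        linear_combination hcomb2
      simp only [Prod.ext_iff, Prod.fst_add, Prod.snd_add, Prod.smul_fst, Prod.smul_snd,
        smul_eq_mul]
      exact ⟨hfst.symm, hsnd.symm⟩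

lemma strap_open (a b α β γ δ : ℝ) : IsOpen (STrap a b α β γ δ) := by
  have h1 : IsOpen {p : ℝ × ℝ | a < p.1} := isOpen_lt continuous_const continuous_fst
  have h2 : IsOpen {p : ℝ × ℝ | p.1 < b} := isOpen_lt continuous_fst continuous_const
  have h3 : IsOpen {p : ℝ × ℝ | α + β * p.1 < p.2} :=
    isOpen_lt (by continuity) continuous_snd
  have h4 : IsOpen {p : ℝ × ℝ | p.2 < γ + δ * p.1} :=
    isOpen_lt continuous_snd (by continuity)
  have : STrap a b α β γ δ
      = ({p : ℝ × ℝ | a < p.1} ∩ {p | p.1 < b}) ∩ ({p | α + β * p.1 < p.2} ∩ {p | p.2 < γ + δ * p.1}) := by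
    ext p; simp [STrap, and_assoc]
  rw [this]
  exact ((h1.inter h2).inter (h3.inter h4))

lemma strap_subset_interior (a b α β γ δ : ℝ) :
    STrap a b α β γ δ ⊆ interior (Trap a b α β γ δ) :=
  interior_maximal (fun p hp => ⟨le_of_lt hp.1, le_of_lt hp.2.1, le_of_lt hp.2.2.1,
    le_of_lt hp.2.2.2⟩) (strap_open a b α β γ δ)

lemma interior_subset_strap (a b α β γ δ : ℝ) :
    interior (Trap a b α β γ δ) ⊆ STrap a b α β γ δ := by
  intro p hp
  obtain ⟨ε, hε, hball⟩ := Metric.isOpen_iff.1 isOpen_interior p hp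
  have hball' : Metric.ball p ε ⊆ Trap a b α β γ δ := hball.trans interior_subset
  have hmem : ∀ u v : ℝ, |u| < ε → |v| < ε → ((p.1 + u, p.2 + v) : ℝ × ℝ) ∈ Trap a b α β γ δ := by
    intro u v hu hv
    apply hball'
    rw [Metric.mem_ball, Prod.dist_eq]
    apply max_lt <;> simpa [Real.dist_eq]
  have hε2 : |ε/2| < ε := by rw [abs_of_pos (by linarith)]; linarith
  have hε2' : |-(ε/2)| < ε := by rw [abs_neg]; exact hε2
  have h01 : |(0:ℝ)| < ε := by simpa using hε
  have hA := hmem (-(ε/2)) 0 hε2' h01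
  have hB := hmem (ε/2) 0 hε2 h01
  have hC := hmem 0 (-(ε/2)) h01 hε2'
  have hD := hmem 0 (ε/2) h01 hε2
  obtain ⟨hA1, -, -, -⟩ := hA
  obtain ⟨-, hB2, -, -⟩ := hB
  obtain ⟨-, -, hC3, -⟩ := hC
  obtain ⟨-, -, -, hD4⟩ := hD
  simp only at hA1 hB2 hC3 hD4
  exact ⟨by linarith, by linarith, by linarith, by linarith⟩

end CorridorAux
namespace CorridorAux

open Set

/-- The graph of `x ↦ α + β x` over the interval `[s,t]`. -/
def Gr (s t α β : ℝ) : Set (ℝ × ℝ) :=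
  {p | s ≤ p.1 ∧ p.1 ≤ t ∧ p.2 = α + β * p.1}

lemma seg_graph (α β : ℝ) {s t : ℝ} (hst : s ≤ t) :
    segment ℝ ((s, α + β * s) : ℝ × ℝ) (t, α + β * t) = Gr s t α β := by
  ext p
  constructor
  · rintro ⟨u, v, hu, hv, huv, rfl⟩
    obtain rfl : v = 1 - u := by linarith
    simp only [Gr, Prod.fst_add, Prod.snd_add, Prod.smul_fst, Prod.smul_snd, smul_eq_mul,
      mem_setOf_eq]
    refine ⟨by nlinarith, by nlinarith, by ring⟩
  · rintro ⟨h1, h2, h3⟩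
    rcases eq_or_lt_of_le hst with rfl | hlt
    · have hps : p = (s, α + β * s) := by
        have : p.1 = s := le_antisymm h2 h1
        exact Prod.ext this (by rw [h3, this])
      rw [hps]; exact left_mem_segment _ _ _
    · have hts : t - s ≠ 0 := sub_ne_zero.2 (ne_of_gt hlt)
      refine ⟨(t - p.1) / (t - s), (p.1 - s) / (t - s), ?_, ?_, ?_, ?_⟩
      · exact div_nonneg (by linarith) (by linarith)
      · exact div_nonneg (by linarith) (by linarith)
      · rw [← add_div, div_eq_one_iff_eq hts]; ring
      · apply Prod.ext <;>
          simp only [Prod.fst_add, Prod.snd_add, Prod.smul_fst, Prod.smul_snd, smul_eq_mul]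
        · field_simp; ring
        · rw [h3]; field_simp; ring

/-- Every point of a segment containing a nondegenerate sub-segment of the graph of
an affine function lies on that graph. -/
lemma seg_on_graph {α β : ℝ} {u v : ℝ × ℝ} {a b : ℝ} (hab : a < b)
    (hsub : segment ℝ ((a, α + β * a) : ℝ × ℝ) (b, α + β * b) ⊆ segment ℝ u v) :
    ∀ p ∈ segment ℝ u v, p.2 = α + β * p.1 := by
  have hm1 : ((a, α + β * a) : ℝ × ℝ) ∈ segment ℝ u v := hsub (left_mem_segment _ _ _)
  have hm2 : ((b, α + β * b) : ℝ × ℝ) ∈ segment ℝ u v := hsub (right_mem_segment _ _ _)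
  obtain ⟨s₁, t₁, hs₁, ht₁, hst₁, h₁⟩ := hm1
  obtain ⟨s₂, t₂, hs₂, ht₂, hst₂, h₂⟩ := hm2
  obtain rfl : t₁ = 1 - s₁ := by linarith
  obtain rfl : t₂ = 1 - s₂ := by linarith
  have e11 : s₁ * u.1 + (1 - s₁) * v.1 = a := congrArg Prod.fst h₁
  have e12 : s₁ * u.2 + (1 - s₁) * v.2 = α + β * a := congrArg Prod.snd h₁
  have e21 : s₂ * u.1 + (1 - s₂) * v.1 = b := congrArg Prod.fst h₂
  have e22 : s₂ * u.2 + (1 - s₂) * v.2 = α + β * b := congrArg Prod.snd h₂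
  have F1 : s₁ * (u.2 - β * u.1) + (1 - s₁) * (v.2 - β * v.1) = α := by
    linear_combination e12 - β * e11
  have F2 : s₂ * (u.2 - β * u.1) + (1 - s₂) * (v.2 - β * v.1) = α := by
    linear_combination e22 - β * e21
  have hsne : s₁ ≠ s₂ := by
    intro h
    have : a = b := by rw [← e11, ← e21, h]
    exact absurd this (ne_of_lt hab)
  have hfv : u.2 - β * u.1 = v.2 - β * v.1 := by
    have h0 : (s₁ - s₂) * ((u.2 - β * u.1) - (v.2 - β * v.1)) = 0 := by
      linear_combination F1 - F2
    rcases mul_eq_zero.1 h0 with h | h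
    · exact absurd (by linarith : s₁ = s₂) hsne
    · linarith
  have hfu : u.2 - β * u.1 = α := by linear_combination F1 + (1 - s₁) * hfv
  have hfvα : v.2 - β * v.1 = α := by rw [← hfv]; exact hfu
  rintro p ⟨s, t, hs, ht, hst, rfl⟩
  obtain rfl : t = 1 - s := by linarith
  simp only [Prod.fst_add, Prod.snd_add, Prod.smul_fst, Prod.smul_snd, smul_eq_mul]
  linear_combination s * hfu + (1 - s) * hfvα

end CorridorAux
namespace CorridorAux

open Set

lemma edge_graph_repr {P E : Set (ℝ × ℝ)} {α β a b : ℝ} (hE : IsEdge P E) (hab : a < b)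
    (hsub : segment ℝ ((a, α + β * a) : ℝ × ℝ) (b, α + β * b) ⊆ E) :
    ∃ s t : ℝ, s ≤ a ∧ b ≤ t ∧ E = Gr s t α β := by
  obtain ⟨u, v, huv, hEeq⟩ := hE.1
  rw [hEeq] at hsub
  have hgr := seg_on_graph hab hsub
  have hu : u = (u.1, α + β * u.1) := Prod.ext rfl (hgr u (left_mem_segment _ _ _))
  have hv : v = (v.1, α + β * v.1) := Prod.ext rfl (hgr v (right_mem_segment _ _ _))
  have hne : u.1 ≠ v.1 := by
    intro h; apply huv; rw [hu, hv, h]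
  have key : ∀ w z : ℝ × ℝ, w.1 ≤ z.1 → w = (w.1, α + β * w.1) → z = (z.1, α + β * z.1) →
      segment ℝ w z = Gr w.1 z.1 α β := by
    intro w z hwz hw hz
    conv_lhs => rw [hw, hz]
    exact seg_graph α β hwz
  rcases le_total u.1 v.1 with h | h
  · have hE2 : E = Gr u.1 v.1 α β := by rw [hEeq, key u v h hu hv]
    have ha := hsub (left_mem_segment ℝ _ _)
    have hb := hsub (right_mem_segment ℝ _ _)
    rw [← hEeq] at ha hb
    rw [hE2] at ha hb
    exact ⟨u.1, v.1, ha.1, hb.2.1, hE2⟩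
  · have hE2 : E = Gr v.1 u.1 α β := by rw [hEeq, segment_symm, key v u h hv hu]
    have ha := hsub (left_mem_segment ℝ _ _)
    have hb := hsub (right_mem_segment ℝ _ _)
    rw [← hEeq] at ha hb
    rw [hE2] at ha hb
    exact ⟨v.1, u.1, ha.1, hb.2.1, hE2⟩

lemma merge_edges {P E E' : Set (ℝ × ℝ)} {α β a b a' b' : ℝ}
    (hE : IsEdge P E) (hE' : IsEdge P E') (hab : a < b) (hab' : a' < b')
    (h1 : segment ℝ ((a, α + β * a) : ℝ × ℝ) (b, α + β * b) ⊆ E)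
    (h2 : segment ℝ ((a', α + β * a') : ℝ × ℝ) (b', α + β * b') ⊆ E')
    (hov : a' < b) (hov2 : a < b') :
    segment ℝ ((min a a', α + β * min a a') : ℝ × ℝ)
      (max b b', α + β * max b b') ⊆ E := by
  obtain ⟨s, t, hsa, hbt, hEeq⟩ := edge_graph_repr hE hab h1
  obtain ⟨s', t', hsa', hbt', hEeq'⟩ := edge_graph_repr hE' hab' h2
  set S := min s s' with hS
  set T := max t t' with hT
  have hST : S < T := by
    have h1' : S ≤ s := min_le_left _ _
    have h2' : t ≤ T := le_max_left _ _
    have : s < t := by linarith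
    linarith
  have hGr : Gr S T α β = segment ℝ ((S, α + β * S) : ℝ × ℝ) (T, α + β * T) :=
    (seg_graph α β hST.le).symm
  have hcover : Gr S T α β ⊆ E ∪ E' := by
    rintro p ⟨hp1, hp2, hp3⟩
    rcases le_or_gt p.1 t with hpt | hpt
    · rcases le_or_gt s p.1 with hsp | hsp
      · left; rw [hEeq]; exact ⟨hsp, hpt, hp3⟩
      · right; rw [hEeq']
        have hs'p : s' ≤ p.1 := by
          by_contra h
          push_neg at h
          exact absurd hp1 (not_le.2 (lt_min hsp h))
        have hpt' : p.1 ≤ t' := by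
          have : p.1 < s := hsp
          have : s ≤ a := hsa
          linarith [hsa', hbt', hab', hov2]
        exact ⟨hs'p, hpt', hp3⟩
    · right; rw [hEeq']
      have hs'p : s' ≤ p.1 := by linarith [hsa', hbt]
      have hpt' : p.1 ≤ t' := by
        by_contra h
        push_neg at h
        exact absurd hp2 (not_le.2 (max_lt hpt h))
      exact ⟨hs'p, hpt', hp3⟩
  have hfr : Gr S T α β ⊆ frontier P := hcover.trans (union_subset hE.2.1 hE'.2.1)
  have hseg : IsSeg (Gr S T α β) := by
    refine ⟨(S, α + β * S), (T, α + β * T), ?_, hGr⟩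
    intro h
    exact absurd (congrArg Prod.fst h) (ne_of_lt hST)
  have hEF : E ⊆ Gr S T α β := by
    rw [hEeq]
    rintro p ⟨hp1, hp2, hp3⟩
    exact ⟨le_trans (min_le_left _ _) hp1, le_trans hp2 (le_max_left _ _), hp3⟩
  have hFE : Gr S T α β = E := hE.2.2 _ hseg hfr hEF
  have hmm : min a a' ≤ max b b' := le_trans (min_le_left _ _) (hab.le.trans (le_max_left _ _))
  rw [seg_graph α β hmm, ← hFE]
  rintro p ⟨hp1, hp2, hp3⟩
  refine ⟨?_, ?_, hp3⟩
  · exact le_trans (le_min (le_trans (min_le_left _ _) hsa)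
      (le_trans (min_le_right _ _) hsa')) hp1
  · exact le_trans hp2 (max_le (le_trans hbt (le_max_left _ _))
      (le_trans hbt' (le_max_right _ _)))

end CorridorAux
namespace CorridorAux

open Set

lemma shift_mem_ball (p : ℝ × ℝ) {ε u v : ℝ} (hu : |u| < ε) (hv : |v| < ε) :
    ((p.1 + u, p.2 + v) : ℝ × ℝ) ∈ Metric.ball p ε := by
  rw [Metric.mem_ball, Prod.dist_eq]
  apply max_lt <;> simpa [Real.dist_eq]

lemma hcorridor_norm {P C : Set (ℝ × ℝ)} (h : IsHCorridor P C) :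
    ∃ a b α β γ δ : ℝ, a < b ∧ α + β * a < γ + δ * a ∧ α + β * b < γ + δ * b ∧
      C = Trap a b α β γ δ ∧ C ⊆ P ∧
      (∃ E, IsEdge P E ∧ segment ℝ ((a, α + β * a) : ℝ × ℝ) (b, α + β * b) ⊆ E) ∧
      (∃ E, IsEdge P E ∧ segment ℝ ((a, γ + δ * a) : ℝ × ℝ) (b, γ + δ * b) ⊆ E) := by
  obtain ⟨x₁, x₂, y₁, y₂, y₃, y₄, h12, h12', h34, hCeq, hCP, hEb, hEt⟩ := h
  have hne : x₂ - x₁ ≠ 0 := sub_ne_zero.2 (ne_of_gt h12)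
  set β := (y₃ - y₁) / (x₂ - x₁) with hβ
  set δ := (y₄ - y₂) / (x₂ - x₁) with hδ
  set α := y₁ - β * x₁ with hα
  set γ := y₂ - δ * x₁ with hγ
  have e1 : y₁ = α + β * x₁ := by rw [hα]; ring
  have e2 : y₂ = γ + δ * x₁ := by rw [hγ]; ring
  have e3 : y₃ = α + β * x₂ := by rw [hα, hβ]; field_simp; ring
  have e4 : y₄ = γ + δ * x₂ := by rw [hγ, hδ]; field_simp; ring
  rw [e1, e2, e3, e4] at hCeq
  rw [e1, e3] at hEb
  rw [e2, e4] at hEt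
  rw [e1, e2] at h12'
  rw [e3, e4] at h34
  exact ⟨x₁, x₂, α, β, γ, δ, h12, h12', h34,
    hCeq.trans (hull_trap α β γ δ h12 h12'.le h34.le), hCP, hEb, hEt⟩

theorem hcorridors_eq {P C C' : Set (ℝ × ℝ)} (hC : IsMaxHCorridor P C)
    (hC' : IsMaxHCorridor P C') (hne : (interior C ∩ interior C').Nonempty) : C = C' := by
  obtain ⟨a, b, α, β, γ, δ, hab, hya, hyb, hCeq, hCP, ⟨E1, hE1, hs1⟩, ⟨E2, hE2, hs2⟩⟩ :=
    hcorridor_norm hC.1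
  obtain ⟨a', b', α', β', γ', δ', hab', hya', hyb', hC'eq, hC'P, ⟨E1', hE1', hs1'⟩,
    ⟨E2', hE2', hs2'⟩⟩ := hcorridor_norm hC'.1
  have hstrC : interior C ⊆ STrap a b α β γ δ := by
    rw [hCeq]; exact interior_subset_strap a b α β γ δ
  have hstrC' : interior C' ⊆ STrap a' b' α' β' γ' δ' := by
    rw [hC'eq]; exact interior_subset_strap a' b' α' β' γ' δ'
  have hintC : STrap a b α β γ δ ⊆ interior P :=
    (strap_subset_interior a b α β γ δ).trans (by rw [← hCeq]; exact interior_mono hCP)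
  have hintC' : STrap a' b' α' β' γ' δ' ⊆ interior P :=
    (strap_subset_interior a' b' α' β' γ' δ').trans
      (by rw [← hC'eq]; exact interior_mono hC'P)
  -- frontier points on the four boundary lines
  have hbfr : ∀ x : ℝ, a ≤ x → x ≤ b → ((x, α + β * x) : ℝ × ℝ) ∈ frontier P := by
    intro x h1 h2
    exact hE1.2.1 (hs1 (by rw [seg_graph α β hab.le]; exact ⟨h1, h2, rfl⟩))
  have htfr : ∀ x : ℝ, a ≤ x → x ≤ b → ((x, γ + δ * x) : ℝ × ℝ) ∈ frontier P := by
    intro x h1 h2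
    exact hE2.2.1 (hs2 (by rw [seg_graph γ δ hab.le]; exact ⟨h1, h2, rfl⟩))
  have hbfr' : ∀ x : ℝ, a' ≤ x → x ≤ b' → ((x, α' + β' * x) : ℝ × ℝ) ∈ frontier P := by
    intro x h1 h2
    exact hE1'.2.1 (hs1' (by rw [seg_graph α' β' hab'.le]; exact ⟨h1, h2, rfl⟩))
  have htfr' : ∀ x : ℝ, a' ≤ x → x ≤ b' → ((x, γ' + δ' * x) : ℝ × ℝ) ∈ frontier P := by
    intro x h1 h2
    exact hE2'.2.1 (hs2' (by rw [seg_graph γ' δ' hab'.le]; exact ⟨h1, h2, rfl⟩))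
  -- at every common interior point the boundary lines agree
  have hbot_eq : ∀ z : ℝ × ℝ, z ∈ interior C → z ∈ interior C' →
      α + β * z.1 = α' + β' * z.1 := by
    intro z hz hz'
    obtain ⟨hz1, hz2, hz3, hz4⟩ := hstrC hz
    obtain ⟨hz1', hz2', hz3', hz4'⟩ := hstrC' hz'
    rcases lt_trichotomy (α + β * z.1) (α' + β' * z.1) with h | h | h
    · exfalso
      have hfr := hbfr' z.1 hz1'.le hz2'.le
      exact hfr.2 (hintC ⟨hz1, hz2, h, lt_trans hz3' hz4⟩)
    · exact h
    · exfalso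
      have hfr := hbfr z.1 hz1.le hz2.le
      exact hfr.2 (hintC' ⟨hz1', hz2', h, lt_trans hz3 hz4'⟩)
  have htop_eq : ∀ z : ℝ × ℝ, z ∈ interior C → z ∈ interior C' →
      γ + δ * z.1 = γ' + δ' * z.1 := by
    intro z hz hz'
    obtain ⟨hz1, hz2, hz3, hz4⟩ := hstrC hz
    obtain ⟨hz1', hz2', hz3', hz4'⟩ := hstrC' hz'
    rcases lt_trichotomy (γ + δ * z.1) (γ' + δ' * z.1) with h | h | h
    · exfalso
      have hfr := htfr z.1 hz1.le hz2.le
      exact hfr.2 (hintC' ⟨hz1', hz2', lt_trans hz3' hz4, h⟩)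
    · exact h
    · exfalso
      have hfr := htfr' z.1 hz1'.le hz2'.le
      exact hfr.2 (hintC ⟨hz1, hz2, lt_trans hz3 hz4', h⟩)
  -- two common interior points with distinct abscissae
  obtain ⟨p, hpC, hpC'⟩ := hne
  obtain ⟨ε, hε, hball⟩ := Metric.isOpen_iff.1 (isOpen_interior.inter isOpen_interior) p
    ⟨hpC, hpC'⟩
  have hε2 : |ε / 2| < ε := by rw [abs_of_pos (by linarith)]; linarith
  have h0 : |(0 : ℝ)| < ε := by simpa using hε
  have hq := hball (shift_mem_ball p hε2 h0)
  set q : ℝ × ℝ := (p.1 + ε / 2, p.2 + 0) with hqdef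
  have e1 := hbot_eq p hpC hpC'
  have e2 := hbot_eq q hq.1 hq.2
  have f1 := htop_eq p hpC hpC'
  have f2 := htop_eq q hq.1 hq.2
  have hq1 : q.1 = p.1 + ε / 2 := rfl
  have hβ : β' = β := by
    have h0' : (β - β') * (ε / 2) = 0 := by
      rw [hq1] at e2; linear_combination e2 - e1
    rcases mul_eq_zero.1 h0' with h | h
    · linarith
    · linarith
  have hα : α' = α := by rw [hβ] at e1; linarith
  have hδ : δ' = δ := by
    have h0' : (δ - δ') * (ε / 2) = 0 := by
      rw [hq1] at f2; linear_combination f2 - f1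
    rcases mul_eq_zero.1 h0' with h | h
    · linarith
    · linarith
  have hγ : γ' = γ := by rw [hδ] at f1; linarith
  simp only [hα, hβ, hγ, hδ] at hya' hyb' hC'eq hs1' hs2'
  -- overlap of the two x-intervals
  obtain ⟨hp1, hp2, -, -⟩ := hstrC hpC
  obtain ⟨hp1', hp2', -, -⟩ := hstrC' hpC'
  have hov1 : a < b' := lt_trans hp1 hp2'
  have hov2 : a' < b := lt_trans hp1' hp2
  -- the merged corridor
  set A := min a a' with hA
  set B := max b b' with hB
  have hAB : A < B := by
    have h1' : A ≤ a := min_le_left _ _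
    have h2' : b ≤ B := le_max_left _ _
    linarith
  have hyA : α + β * A < γ + δ * A := by
    rcases min_cases a a' with ⟨h, -⟩ | ⟨h, -⟩ <;> rw [hA, h]
    · exact hya
    · exact hya'
  have hyB : α + β * B < γ + δ * B := by
    rcases max_cases b b' with ⟨h, -⟩ | ⟨h, -⟩ <;> rw [hB, h]
    · exact hyb
    · exact hyb'
  have hunion : Trap A B α β γ δ = C ∪ C' := by
    rw [hCeq, hC'eq]
    ext z
    constructor
    · rintro ⟨h1, h2, h3, h4⟩
      rcases le_or_gt z.1 b with hzb | hzb
      · rcases le_or_gt a z.1 with hza | hza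
        · exact Or.inl ⟨hza, hzb, h3, h4⟩
        · refine Or.inr ⟨?_, by linarith, h3, h4⟩
          by_contra hh
          push_neg at hh
          exact absurd h1 (not_le.2 (lt_min hza hh))
      · refine Or.inr ⟨by linarith, ?_, h3, h4⟩
        by_contra hh
        push_neg at hh
        exact absurd h2 (not_le.2 (max_lt hzb hh))
    · rintro (⟨h1, h2, h3, h4⟩ | ⟨h1, h2, h3, h4⟩)
      · exact ⟨le_trans (min_le_left _ _) h1, le_trans h2 (le_max_left _ _), h3, h4⟩
      · exact ⟨le_trans (min_le_right _ _) h1, le_trans h2 (le_max_right _ _), h3, h4⟩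
  have hmerge1 : segment ℝ ((A, α + β * A) : ℝ × ℝ) (B, α + β * B) ⊆ E1 :=
    merge_edges hE1 hE1' hab hab' hs1 hs1' hov2 hov1
  have hmerge2 : segment ℝ ((A, γ + δ * A) : ℝ × ℝ) (B, γ + δ * B) ⊆ E2 :=
    merge_edges hE2 hE2' hab hab' hs2 hs2' hov2 hov1
  have hCor : IsHCorridor P (Trap A B α β γ δ) := by
    refine ⟨A, B, α + β * A, γ + δ * A, α + β * B, γ + δ * B, hAB, hyA, hyB,
      (hull_trap α β γ δ hAB hyA.le hyB.le).symm, ?_, ⟨E1, hE1, hmerge1⟩, ⟨E2, hE2, hmerge2⟩⟩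
    rw [hunion]
    exact union_subset hCP hC'P
  have h1 : Trap A B α β γ δ = C := hC.2 _ hCor (by rw [hunion]; exact subset_union_left)
  have h2 : Trap A B α β γ δ = C' := hC'.2 _ hCor (by rw [hunion]; exact subset_union_right)
  rw [← h1, h2]

end CorridorAux
namespace CorridorAux

open Set

noncomputable def swA : (ℝ × ℝ) →ᵃ[ℝ] (ℝ × ℝ) :=
  (LinearEquiv.prodComm ℝ ℝ ℝ).toLinearMap.toAffineMap

lemma swA_apply (p : ℝ × ℝ) : swA p = Prod.swap p := rfl

lemma sw_sw (S : Set (ℝ × ℝ)) : Prod.swap '' (Prod.swap '' S) = S := by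
  rw [Set.image_image]; simp

lemma sw_image_interior (S : Set (ℝ × ℝ)) :
    Prod.swap '' interior S = interior (Prod.swap '' S) := by
  have := (Homeomorph.prodComm ℝ ℝ).image_interior S
  simpa [Homeomorph.coe_prodComm] using this

lemma sw_image_closure (S : Set (ℝ × ℝ)) :
    Prod.swap '' closure S = closure (Prod.swap '' S) := by
  have := (Homeomorph.prodComm ℝ ℝ).image_closure S
  simpa [Homeomorph.coe_prodComm] using this

lemma sw_image_frontier (S : Set (ℝ × ℝ)) :
    Prod.swap '' frontier S = frontier (Prod.swap '' S) := by
  have := (Homeomorph.prodComm ℝ ℝ).image_frontier S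
  simpa [Homeomorph.coe_prodComm] using this

lemma sw_image_segment (x y : ℝ × ℝ) :
    Prod.swap '' segment ℝ x y = segment ℝ x.swap y.swap := by
  have := image_segment ℝ swA x y
  exact this

lemma sw_image_hull (s : Set (ℝ × ℝ)) :
    Prod.swap '' convexHull ℝ s = convexHull ℝ (Prod.swap '' s) := by
  have := (LinearEquiv.prodComm ℝ ℝ ℝ).toLinearMap.image_convexHull s
  simpa using this

lemma isSeg_swap {E : Set (ℝ × ℝ)} (h : IsSeg E) : IsSeg (Prod.swap '' E) := by
  obtain ⟨x, y, hxy, rfl⟩ := h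
  exact ⟨x.swap, y.swap, fun h' => hxy (Prod.swap_injective h'), sw_image_segment x y⟩

lemma isEdge_swap {P E : Set (ℝ × ℝ)} (h : IsEdge P E) :
    IsEdge (Prod.swap '' P) (Prod.swap '' E) := by
  obtain ⟨hseg, hfr, hmax⟩ := h
  refine ⟨isSeg_swap hseg, ?_, ?_⟩
  · rw [← sw_image_frontier]
    exact image_mono hfr
  · intro E₂ hseg₂ hfr₂ hsub₂
    have h2 : Prod.swap '' E₂ ⊆ frontier P := by
      have := image_mono (f := Prod.swap) hfr₂
      rwa [← sw_image_frontier, sw_sw] at this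
    have h3 : E ⊆ Prod.swap '' E₂ := by
      have := image_mono (f := Prod.swap) hsub₂
      rwa [sw_sw] at this
    have h4 := hmax _ (isSeg_swap hseg₂) h2 h3
    rw [← sw_sw E₂, h4]

lemma isPolygon_swap {P : Set (ℝ × ℝ)} (h : IsPolygon P) : IsPolygon (Prod.swap '' P) := by
  obtain ⟨hc, hne, hcl, n, f, g, hfr⟩ := h
  refine ⟨hc.image continuous_swap, ?_, ?_, n, fun i => (f i).swap, fun i => (g i).swap, ?_⟩
  · rw [← sw_image_interior]
    exact hne.image _
  · conv_lhs => rw [hcl]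
    rw [← sw_image_interior, ← sw_image_closure]
  · rw [← sw_image_frontier, hfr, image_iUnion]
    exact iUnion_congr fun i => sw_image_segment _ _

lemma vcorr_to_h {P C : Set (ℝ × ℝ)} (h : IsVCorridor P C) :
    IsHCorridor (Prod.swap '' P) (Prod.swap '' C) := by
  obtain ⟨y₁, y₂, x₁, x₂, x₃, x₄, h12, h12', h34, hCeq, hCP, ⟨E1, hE1, hs1⟩, ⟨E2, hE2, hs2⟩⟩ := h
  refine ⟨y₁, y₂, x₁, x₂, x₃, x₄, h12, h12', h34, ?_, image_mono hCP,
    ⟨Prod.swap '' E1, isEdge_swap hE1, ?_⟩, ⟨Prod.swap '' E2, isEdge_swap hE2, ?_⟩⟩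
  · rw [hCeq, sw_image_hull]
    congr 1
    simp [Set.image_insert_eq]
  · have := sw_image_segment ((x₁, y₁) : ℝ × ℝ) (x₃, y₂)
    simp only [Prod.swap_prod_mk] at this
    rw [← this]
    exact image_mono hs1
  · have := sw_image_segment ((x₂, y₁) : ℝ × ℝ) (x₄, y₂)
    simp only [Prod.swap_prod_mk] at this
    rw [← this]
    exact image_mono hs2

lemma hcorr_to_v {P C : Set (ℝ × ℝ)} (h : IsHCorridor P C) :
    IsVCorridor (Prod.swap '' P) (Prod.swap '' C) := by
  obtain ⟨x₁, x₂, y₁, y₂, y₃, y₄, h12, h12', h34, hCeq, hCP, ⟨E1, hE1, hs1⟩, ⟨E2, hE2, hs2⟩⟩ := h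
  refine ⟨x₁, x₂, y₁, y₂, y₃, y₄, h12, h12', h34, ?_, image_mono hCP,
    ⟨Prod.swap '' E1, isEdge_swap hE1, ?_⟩, ⟨Prod.swap '' E2, isEdge_swap hE2, ?_⟩⟩
  · rw [hCeq, sw_image_hull]
    congr 1
    simp [Set.image_insert_eq]
  · have := sw_image_segment ((x₁, y₁) : ℝ × ℝ) (x₂, y₃)
    simp only [Prod.swap_prod_mk] at this
    rw [← this]
    exact image_mono hs1
  · have := sw_image_segment ((x₁, y₂) : ℝ × ℝ) (x₂, y₄)
    simp only [Prod.swap_prod_mk] at this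
    rw [← this]
    exact image_mono hs2

lemma maxV_to_maxH {P C : Set (ℝ × ℝ)} (h : IsMaxVCorridor P C) :
    IsMaxHCorridor (Prod.swap '' P) (Prod.swap '' C) := by
  refine ⟨vcorr_to_h h.1, fun C₂ hC₂ hsub => ?_⟩
  have h2 : IsVCorridor P (Prod.swap '' C₂) := by
    have := hcorr_to_v hC₂
    rwa [sw_sw] at this
  have h3 : C ⊆ Prod.swap '' C₂ := by
    have := image_mono (f := Prod.swap) hsub
    rwa [sw_sw] at this
  have h4 := h.2 _ h2 h3
  rw [← sw_sw C₂, h4]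

end CorridorAux

/-- Two maximal horizontal corridors of a polygon are equal or have disjoint interiors,
and likewise for maximal vertical corridors. -/
theorem maximal_corridors_disjoint (P : Set (ℝ × ℝ)) (hP : IsPolygon P) :
    (∀ C C', IsMaxHCorridor P C → IsMaxHCorridor P C' →
      C = C' ∨ interior C ∩ interior C' = ∅) ∧
    (∀ C C', IsMaxVCorridor P C → IsMaxVCorridor P C' →
      C = C' ∨ interior C ∩ interior C' = ∅) := by
  constructor
  · intro C C' hC hC'
    by_cases h : interior C ∩ interior C' = ∅
    · exact Or.inr h
    · exact Or.inl (CorridorAux.hcorridors_eq hC hC' (Set.nonempty_iff_ne_empty.2 h))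
  · intro C C' hC hC'
    by_cases h : interior C ∩ interior C' = ∅
    · exact Or.inr h
    · left
      have h1 := CorridorAux.maxV_to_maxH hC
      have h2 := CorridorAux.maxV_to_maxH hC'
      have hne : (interior (Prod.swap '' C) ∩ interior (Prod.swap '' C')).Nonempty := by
        rw [← CorridorAux.sw_image_interior, ← CorridorAux.sw_image_interior,
          ← Set.image_inter Prod.swap_injective]
        exact (Set.nonempty_iff_ne_empty.2 h).image _
      exact Set.image_injective.2 Prod.swap_injective
        (CorridorAux.hcorridors_eq h1 h2 hne)
end

section
/- Let S and T be convex polygons with S ⊆ T. If T admits a small cover of cardinality k, then S admits a small cover of cardinality at most k. In particular, the minimum cardinality of a small cover of S is at most the minimum cardinality of a small cover of T. -/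
open Set

/-- An axis-aligned unit square `[a, a+1] × [b, b+1]`. -/
def UnitSquare (a b : ℝ) : Set (ℝ × ℝ) := Icc a (a + 1) ×ˢ Icc b (b + 1)

/-- A small piece: a connected polygon contained in some axis-aligned unit square. -/
def IsSmallPiece (Q : Set (ℝ × ℝ)) : Prop :=
  IsPolygon Q ∧ IsConnected Q ∧ ∃ a b : ℝ, Q ⊆ UnitSquare a b

/-- A small cover of `P`: a finite family of small pieces, each contained in `P`,
whose union is `P`. -/
def IsSmallCover (P : Set (ℝ × ℝ)) (𝒬 : Set (Set (ℝ × ℝ))) : Prop :=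
  𝒬.Finite ∧ (∀ Q ∈ 𝒬, IsSmallPiece Q ∧ Q ⊆ P) ∧ ⋃₀ 𝒬 = P

/- ### Auxiliary lemmas -/

lemma unitSquare_isClosed (a b : ℝ) : IsClosed (UnitSquare a b) :=
  isClosed_Icc.prod isClosed_Icc

lemma unitSquare_convex (a b : ℝ) : Convex ℝ (UnitSquare a b) :=
  (convex_Icc _ _).prod (convex_Icc _ _)

lemma isCompact_seg (u v : ℝ × ℝ) : IsCompact (segment ℝ u v) := by
  rw [segment_eq_image_lineMap]
  exact isCompact_Icc.image AffineMap.lineMap_continuous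

lemma convex_subset_closure_interior {s : Set (ℝ × ℝ)} (hs : Convex ℝ s)
    (hne : (interior s).Nonempty) : s ⊆ closure (interior s) := by
  obtain ⟨y, hy⟩ := hne
  intro x hx
  have hmem : ∀ n : ℕ, x + (1 / (n + 1) : ℝ) • (y - x) ∈ interior s := by
    intro n
    refine hs.add_smul_sub_mem_interior hx hy ⟨by positivity, ?_⟩
    rw [div_le_one (by positivity)]
    linarith [Nat.cast_nonneg (α := ℝ) n]
  have hconv : Filter.Tendsto (fun n : ℕ => x + (1 / (n + 1) : ℝ) • (y - x))
      Filter.atTop (nhds x) := by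
    have h0 := tendsto_one_div_add_atTop_nhds_zero_nat (𝕜 := ℝ)
    have h1 : Filter.Tendsto (fun n : ℕ => x + (1 / (n + 1) : ℝ) • (y - x))
        Filter.atTop (nhds (x + (0 : ℝ) • (y - x))) :=
      tendsto_const_nhds.add (h0.smul tendsto_const_nhds)
    simpa using h1
  exact mem_closure_of_tendsto hconv (Filter.Eventually.of_forall hmem)

lemma eq_segment_of_convex_compact {K : Set (ℝ × ℝ)} (hK : Convex ℝ K) (hc : IsCompact K)
    (hne : K.Nonempty) {u v : ℝ × ℝ} (hsub : K ⊆ segment ℝ u v) :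
    ∃ x y : ℝ × ℝ, K = segment ℝ x y := by
  set L := AffineMap.lineMap (k := ℝ) u v with hL
  have hLc : Continuous L := AffineMap.lineMap_continuous
  set A : Set ℝ := L ⁻¹' K ∩ Icc 0 1 with hA
  have hAconv : Convex ℝ A := (hK.affine_preimage L).inter (convex_Icc 0 1)
  have hAcomp : IsCompact A := isCompact_Icc.inter_left (hc.isClosed.preimage hLc)
  have hAne : A.Nonempty := by
    obtain ⟨k, hk⟩ := hne
    have hk' : k ∈ L '' Icc 0 1 := by
      rw [← segment_eq_image_lineMap]; exact hsub hk
    obtain ⟨t, ht, hkt⟩ := hk'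
    exact ⟨t, ⟨by rw [mem_preimage, hkt]; exact hk, ht⟩⟩
  have hIcc : A = Icc (sInf A) (sSup A) :=
    eq_Icc_of_connected_compact ⟨hAne, hAconv.isPreconnected⟩ hAcomp
  have hle : sInf A ≤ sSup A := by
    obtain ⟨t, ht⟩ := hAne
    rw [hIcc] at ht
    exact le_trans ht.1 ht.2
  refine ⟨L (sInf A), L (sSup A), ?_⟩
  have hKA : K = L '' A := by
    apply Subset.antisymm
    · intro k hk
      have hk' : k ∈ L '' Icc 0 1 := by
        rw [← segment_eq_image_lineMap]; exact hsub hk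
      obtain ⟨t, ht, hkt⟩ := hk'
      exact ⟨t, ⟨by rw [mem_preimage, hkt]; exact hk, ht⟩, hkt⟩
    · rintro k ⟨t, ⟨htK, _⟩, rfl⟩
      exact htK
  rw [hKA]
  conv_lhs => rw [hIcc, ← segment_eq_Icc hle]
  exact image_segment ℝ L (sInf A) (sSup A)

lemma hseg_eq (a c y : ℝ) (h : a ≤ c) :
    segment ℝ ((a, y) : ℝ × ℝ) (c, y) = Icc a c ×ˢ ({y} : Set ℝ) := by
  ext ⟨p, q⟩
  simp only [segment, mem_setOf_eq, mem_prod, mem_Icc, mem_singleton_iff, Prod.smul_mk,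
    Prod.mk_add_mk, Prod.mk.injEq, smul_eq_mul]
  constructor
  · rintro ⟨s, t, hs, ht, hst, h1, h2⟩
    have hs1 : s = 1 - t := by linarith
    subst hs1
    refine ⟨⟨by nlinarith [mul_nonneg ht (sub_nonneg.mpr h)],
      by nlinarith [mul_nonneg (show (0:ℝ) ≤ 1 - t by linarith) (sub_nonneg.mpr h)]⟩, ?_⟩
    calc q = (1 - t) * y + t * y := h2.symm
      _ = y := by ring
  · rintro ⟨⟨h1, h2⟩, rfl⟩
    rcases eq_or_lt_of_le h with rfl | hlt
    · exact ⟨1, 0, by norm_num, by norm_num, by norm_num, by nlinarith, by norm_num⟩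
    · have hca : c - a ≠ 0 := by linarith
      refine ⟨(c - p) / (c - a), (p - a) / (c - a), div_nonneg (by linarith) (by linarith),
        div_nonneg (by linarith) (by linarith), ?_, ?_, ?_⟩
      · rw [← add_div, div_eq_one_iff_eq hca]; ring
      · field_simp; ring
      · field_simp; ring

lemma vseg_eq (x b d : ℝ) (h : b ≤ d) :
    segment ℝ ((x, b) : ℝ × ℝ) (x, d) = ({x} : Set ℝ) ×ˢ Icc b d := by
  ext ⟨p, q⟩
  simp only [segment, mem_setOf_eq, mem_prod, mem_Icc, mem_singleton_iff, Prod.smul_mk,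
    Prod.mk_add_mk, Prod.mk.injEq, smul_eq_mul]
  constructor
  · rintro ⟨s, t, hs, ht, hst, h1, h2⟩
    have hs1 : s = 1 - t := by linarith
    subst hs1
    refine ⟨?_, by nlinarith [mul_nonneg ht (sub_nonneg.mpr h)],
      by nlinarith [mul_nonneg (show (0:ℝ) ≤ 1 - t by linarith) (sub_nonneg.mpr h)]⟩
    calc p = (1 - t) * x + t * x := h1.symm
      _ = x := by ring
  · rintro ⟨rfl, h1, h2⟩
    rcases eq_or_lt_of_le h with rfl | hlt
    · exact ⟨1, 0, by norm_num, by norm_num, by norm_num, by norm_num, by nlinarith⟩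
    · have hca : d - b ≠ 0 := by linarith
      refine ⟨(d - q) / (d - b), (q - b) / (d - b), div_nonneg (by linarith) (by linarith),
        div_nonneg (by linarith) (by linarith), ?_, ?_, ?_⟩
      · rw [← add_div, div_eq_one_iff_eq hca]; ring
      · field_simp; ring
      · field_simp; ring

lemma frontier_unitSquare (a b : ℝ) :
    frontier (UnitSquare a b) =
      (Icc a (a + 1) ×ˢ ({b} : Set ℝ)) ∪ (Icc a (a + 1) ×ˢ ({b + 1} : Set ℝ)) ∪
      (({a} : Set ℝ) ×ˢ Icc b (b + 1)) ∪ (({a + 1} : Set ℝ) ×ˢ Icc b (b + 1)) := by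
  have h1 : (a : ℝ) ≤ a + 1 := by linarith
  have h2 : (b : ℝ) ≤ b + 1 := by linarith
  rw [UnitSquare, frontier_prod_eq, closure_Icc, closure_Icc, frontier_Icc h1, frontier_Icc h2]
  ext ⟨x, y⟩
  simp only [mem_union, mem_prod, mem_insert_iff, mem_singleton_iff]
  tauto

lemma isSmallPiece_inter {S : Set (ℝ × ℝ)} (hS : IsPolygon S) (hSconv : Convex ℝ S) (a b : ℝ)
    (hne : (interior (S ∩ UnitSquare a b)).Nonempty) :
    IsSmallPiece (S ∩ UnitSquare a b) := by
  set R := S ∩ UnitSquare a b with hR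
  have hRclosed : IsClosed R := hS.1.isClosed.inter (unitSquare_isClosed a b)
  have hRcomp : IsCompact R := hS.1.inter_right (unitSquare_isClosed a b)
  have hRconv : Convex ℝ R := hSconv.inter (unitSquare_convex a b)
  have hRne : R.Nonempty := hne.mono interior_subset
  have hRclos : R = closure (interior R) :=
    Subset.antisymm (convex_subset_closure_interior hRconv hne)
      (closure_minimal interior_subset hRclosed)
  have hintR : interior R = interior S ∩ interior (UnitSquare a b) := interior_inter
  have hfrontR : frontier R = (frontier S ∩ R) ∪ (frontier (UnitSquare a b) ∩ R) := by
    apply Subset.antisymm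
    · intro x hx
      have hxR : x ∈ R := hRclosed.frontier_subset hx
      have hxint : x ∉ interior R := hx.2
      rw [hintR] at hxint
      by_cases hxs : x ∈ interior S
      · have hxu : x ∉ interior (UnitSquare a b) := fun h => hxint ⟨hxs, h⟩
        exact Or.inr ⟨⟨subset_closure hxR.2, hxu⟩, hxR⟩
      · exact Or.inl ⟨⟨subset_closure hxR.1, hxs⟩, hxR⟩
    · rintro x (⟨hxf, hxR⟩ | ⟨hxf, hxR⟩)
      · exact ⟨subset_closure hxR, fun h => hxf.2 (interior_mono inter_subset_left h)⟩
      · exact ⟨subset_closure hxR, fun h => hxf.2 (interior_mono inter_subset_right h)⟩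
  obtain ⟨nS, f, g, hfr⟩ := hS.2.2.2
  have hab : (a : ℝ) ≤ a + 1 := by linarith
  have hbb : (b : ℝ) ≤ b + 1 := by linarith
  set e : Fin 4 → Set (ℝ × ℝ) :=
    ![Icc a (a + 1) ×ˢ ({b} : Set ℝ), Icc a (a + 1) ×ˢ ({b + 1} : Set ℝ),
      ({a} : Set ℝ) ×ˢ Icc b (b + 1), ({a + 1} : Set ℝ) ×ˢ Icc b (b + 1)] with he
  set E : Fin nS ⊕ Fin 4 → Set (ℝ × ℝ) :=
    Sum.elim (fun i => segment ℝ (f i) (g i)) e with hE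
  have hEseg : ∀ j, ∃ u v : ℝ × ℝ, E j = segment ℝ u v := by
    rintro (i | m)
    · exact ⟨f i, g i, rfl⟩
    · fin_cases m
      · exact ⟨(a, b), (a + 1, b), (hseg_eq a (a + 1) b hab).symm⟩
      · exact ⟨(a, b + 1), (a + 1, b + 1), (hseg_eq a (a + 1) (b + 1) hab).symm⟩
      · exact ⟨(a, b), (a, b + 1), (vseg_eq a b (b + 1) hbb).symm⟩
      · exact ⟨(a + 1, b), (a + 1, b + 1), (vseg_eq (a + 1) b (b + 1) hbb).symm⟩
  have hEfrontier : ∀ j, E j ⊆ frontier S ∨ E j ⊆ frontier (UnitSquare a b) := by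
    rintro (i | m)
    · exact Or.inl (hfr ▸ subset_iUnion (fun i => segment ℝ (f i) (g i)) i)
    · refine Or.inr ?_
      rw [frontier_unitSquare a b]
      fin_cases m
      · exact fun x hx => Or.inl (Or.inl (Or.inl hx))
      · exact fun x hx => Or.inl (Or.inl (Or.inr hx))
      · exact fun x hx => Or.inl (Or.inr hx)
      · exact fun x hx => Or.inr hx
  have hEfront : ∀ j, E j ∩ R ⊆ frontier R := by
    intro j
    rcases hEfrontier j with hj | hj
    · rw [hfrontR]
      exact fun x hx => Or.inl ⟨hj hx.1, hx.2⟩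
    · rw [hfrontR]
      exact fun x hx => Or.inr ⟨hj hx.1, hx.2⟩
  have hcover : frontier R ⊆ ⋃ j, E j ∩ R := by
    rw [hfrontR]
    rintro x (⟨hxf, hxR⟩ | ⟨hxf, hxR⟩)
    · rw [hfr] at hxf
      obtain ⟨i, hi⟩ := mem_iUnion.mp hxf
      exact mem_iUnion.mpr ⟨Sum.inl i, hi, hxR⟩
    · rw [frontier_unitSquare a b] at hxf
      rcases hxf with ((h1 | h2) | h3) | h4
      · exact mem_iUnion.mpr ⟨Sum.inr 0, h1, hxR⟩
      · exact mem_iUnion.mpr ⟨Sum.inr 1, h2, hxR⟩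
      · exact mem_iUnion.mpr ⟨Sum.inr 2, h3, hxR⟩
      · exact mem_iUnion.mpr ⟨Sum.inr 3, h4, hxR⟩
  have hfne : (frontier R).Nonempty := by
    by_contra hcon
    rw [not_nonempty_iff_eq_empty] at hcon
    have hsub : R ⊆ interior R := by
      intro x hx
      by_contra hxint
      exact absurd (show x ∈ frontier R from ⟨subset_closure hx, hxint⟩) (by simp [hcon])
    have hRopen : IsOpen R := by
      have : interior R = R := Subset.antisymm interior_subset hsub
      rw [← this]; exact isOpen_interior
    rcases isClopen_iff.mp ⟨hRclosed, hRopen⟩ with h | h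
    · exact hRne.ne_empty h
    · exact hRcomp.ne_univ h
  have key : ∀ j, ∃ p : (ℝ × ℝ) × (ℝ × ℝ),
      E j ∩ R ⊆ segment ℝ p.1 p.2 ∧ segment ℝ p.1 p.2 ⊆ frontier R := by
    intro j
    obtain ⟨u, v, huv⟩ := hEseg j
    by_cases hj : (E j ∩ R).Nonempty
    · have hEjconv : Convex ℝ (E j) := huv ▸ convex_segment u v
      have hEjclosed : IsClosed (E j) := huv ▸ (isCompact_seg u v).isClosed
      obtain ⟨x, y, hxy⟩ := eq_segment_of_convex_compact (hEjconv.inter hRconv)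
        (hRcomp.inter_left hEjclosed) hj (fun z hz => huv ▸ hz.1)
      exact ⟨(x, y), le_of_eq hxy, hxy ▸ hEfront j⟩
    · obtain ⟨p₀, hp₀⟩ := hfne
      rw [not_nonempty_iff_eq_empty] at hj
      refine ⟨(p₀, p₀), by rw [hj]; exact empty_subset _, ?_⟩
      rw [segment_same]
      simpa using hp₀
  choose P hP using key
  refine ⟨⟨hRcomp, hne, hRclos, nS + 4,
    fun i => (P (finSumFinEquiv.symm i)).1, fun i => (P (finSumFinEquiv.symm i)).2, ?_⟩,
    hRconv.isConnected hRne, a, b, inter_subset_right⟩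
  have hre : ⋃ i : Fin (nS + 4), segment ℝ (P (finSumFinEquiv.symm i)).1
      (P (finSumFinEquiv.symm i)).2 = ⋃ j, segment ℝ (P j).1 (P j).2 :=
    finSumFinEquiv.symm.surjective.iUnion_comp (fun j => segment ℝ (P j).1 (P j).2)
  rw [hre]
  apply Subset.antisymm
  · exact hcover.trans (iUnion_mono fun j => (hP j).1)
  · exact iUnion_subset fun j => (hP j).2

lemma exists_cover_of_squares {S : Set (ℝ × ℝ)} (hS : IsPolygon S) (hSconv : Convex ℝ S)
    (G : Set (ℝ × ℝ)) (hG : G.Finite)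
    (hcov : ∀ x ∈ interior S, ∃ p ∈ G, x ∈ UnitSquare p.1 p.2 ∧
      (interior S ∩ interior (UnitSquare p.1 p.2)).Nonempty) :
    ∃ ℛ : Set (Set (ℝ × ℝ)), IsSmallCover S ℛ ∧ ℛ.ncard ≤ G.ncard := by
  set K := {p ∈ G | (interior (S ∩ UnitSquare p.1 p.2)).Nonempty} with hK
  set ℛ := (fun p : ℝ × ℝ => S ∩ UnitSquare p.1 p.2) '' K with hℛ
  have hKfin : K.Finite := hG.subset (sep_subset _ _)
  refine ⟨ℛ, ⟨hKfin.image _, ?_, ?_⟩, ?_⟩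
  · rintro Q ⟨p, ⟨hpG, hpne⟩, rfl⟩
    exact ⟨isSmallPiece_inter hS hSconv p.1 p.2 hpne, inter_subset_left⟩
  · apply Subset.antisymm
    · exact sUnion_subset (by rintro Q ⟨p, _, rfl⟩; exact inter_subset_left)
    · have hint : interior S ⊆ ⋃₀ ℛ := by
        intro x hx
        obtain ⟨p, hpG, hxU, hne2⟩ := hcov x hx
        have hkeep : (interior (S ∩ UnitSquare p.1 p.2)).Nonempty := by
          rw [interior_inter]; exact hne2
        exact ⟨S ∩ UnitSquare p.1 p.2, ⟨p, ⟨hpG, hkeep⟩, rfl⟩, interior_subset hx, hxU⟩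
      have hclosed : IsClosed (⋃₀ ℛ) := by
        rw [sUnion_eq_biUnion]
        exact (hKfin.image _).isClosed_biUnion
          (by rintro Q ⟨p, _, rfl⟩; exact hS.1.isClosed.inter (unitSquare_isClosed _ _))
      calc S = closure (interior S) := hS.2.2.1
        _ ⊆ closure (⋃₀ ℛ) := closure_mono hint
        _ = ⋃₀ ℛ := hclosed.closure_eq
  · calc ℛ.ncard ≤ K.ncard := ncard_image_le hKfin
      _ ≤ G.ncard := ncard_le_ncard (sep_subset _ _) hG

lemma exists_smallCover {T : Set (ℝ × ℝ)} (hT : IsPolygon T) (hTconv : Convex ℝ T) :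
    ∃ 𝒬 : Set (Set (ℝ × ℝ)), IsSmallCover T 𝒬 := by
  have hcov : T ⊆ ⋃ y : ℝ × ℝ, interior (UnitSquare (y.1 - 1/2) (y.2 - 1/2)) := by
    intro x _
    refine mem_iUnion.mpr ⟨x, ?_⟩
    rw [UnitSquare, interior_prod_eq, interior_Icc, interior_Icc]
    exact ⟨⟨by linarith, by linarith⟩, ⟨by linarith, by linarith⟩⟩
  obtain ⟨t, ht⟩ := hT.1.elim_finite_subcover
    (fun y : ℝ × ℝ => interior (UnitSquare (y.1 - 1/2) (y.2 - 1/2)))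
    (fun _ => isOpen_interior) hcov
  set G := (fun y : ℝ × ℝ => (y.1 - 1/2, y.2 - 1/2)) '' (t : Set (ℝ × ℝ)) with hG
  have hcovG : ∀ x ∈ interior T, ∃ p ∈ G, x ∈ UnitSquare p.1 p.2 ∧
      (interior T ∩ interior (UnitSquare p.1 p.2)).Nonempty := by
    intro x hx
    obtain ⟨y, hyt, hxy⟩ := mem_iUnion₂.mp (ht (interior_subset hx))
    exact ⟨(y.1 - 1/2, y.2 - 1/2), ⟨y, hyt, rfl⟩, interior_subset hxy, ⟨x, hx, hxy⟩⟩
  obtain ⟨ℛ, hℛ, _⟩ := exists_cover_of_squares hT hTconv G (t.finite_toSet.image _) hcovG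
  exact ⟨ℛ, hℛ⟩

/-- If `S ⊆ T` are convex polygons and `T` has a small cover of cardinality `k`, then `S`
has one of cardinality at most `k`; in particular the minimum cardinality of a small cover
of `S` is at most that of `T`. -/
theorem convex_cover_monotone (S T : Set (ℝ × ℝ))
    (hS : IsPolygon S) (hSconv : Convex ℝ S)
    (hT : IsPolygon T) (hTconv : Convex ℝ T) (hST : S ⊆ T) :
    (∀ k : ℕ, (∃ 𝒬 : Set (Set (ℝ × ℝ)), IsSmallCover T 𝒬 ∧ 𝒬.ncard = k) →
      ∃ ℛ : Set (Set (ℝ × ℝ)), IsSmallCover S ℛ ∧ ℛ.ncard ≤ k) ∧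
    sInf {k : ℕ | ∃ 𝒬 : Set (Set (ℝ × ℝ)), IsSmallCover S 𝒬 ∧ 𝒬.ncard = k} ≤
      sInf {k : ℕ | ∃ 𝒬 : Set (Set (ℝ × ℝ)), IsSmallCover T 𝒬 ∧ 𝒬.ncard = k} := by
  have part1 : ∀ k : ℕ, (∃ 𝒬 : Set (Set (ℝ × ℝ)), IsSmallCover T 𝒬 ∧ 𝒬.ncard = k) →
      ∃ ℛ : Set (Set (ℝ × ℝ)), IsSmallCover S ℛ ∧ ℛ.ncard ≤ k := by
    rintro k ⟨𝒬, ⟨hQfin, hQmem, hQun⟩, rfl⟩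
    have hchoice : ∀ Q : Set (ℝ × ℝ), ∃ p : ℝ × ℝ, Q ∈ 𝒬 → Q ⊆ UnitSquare p.1 p.2 := by
      intro Q
      by_cases hQ : Q ∈ 𝒬
      · obtain ⟨a, b, hab⟩ := (hQmem Q hQ).1.2.2
        exact ⟨(a, b), fun _ => hab⟩
      · exact ⟨0, fun h => absurd h hQ⟩
    choose c hc using hchoice
    have hcovG : ∀ x ∈ interior S, ∃ p ∈ c '' 𝒬, x ∈ UnitSquare p.1 p.2 ∧
        (interior S ∩ interior (UnitSquare p.1 p.2)).Nonempty := by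
      intro x hx
      have hxT : x ∈ T := hST (interior_subset hx)
      rw [← hQun] at hxT
      obtain ⟨Q, hQ𝒬, hxQ⟩ := hxT
      refine ⟨c Q, mem_image_of_mem c hQ𝒬, hc Q hQ𝒬 hxQ, ?_⟩
      have hQpoly := (hQmem Q hQ𝒬).1.1
      have hxcl : x ∈ closure (interior Q) := hQpoly.2.2.1 ▸ hxQ
      obtain ⟨ε, hε, hball⟩ := Metric.isOpen_iff.mp isOpen_interior x hx
      obtain ⟨z, hz1, hz2⟩ := Metric.mem_closure_iff.mp hxcl ε hε
      refine ⟨z, hball (by rw [Metric.mem_ball, dist_comm]; exact hz2), ?_⟩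
      exact interior_maximal (interior_subset.trans (hc Q hQ𝒬)) isOpen_interior hz1
    obtain ⟨ℛ, hcover, hcard⟩ := exists_cover_of_squares hS hSconv (c '' 𝒬)
      (hQfin.image c) hcovG
    exact ⟨ℛ, hcover, hcard.trans (ncard_image_le hQfin)⟩
  refine ⟨part1, ?_⟩
  obtain ⟨𝒬₀, h𝒬₀⟩ := exists_smallCover hT hTconv
  have hTne : {k : ℕ | ∃ 𝒬 : Set (Set (ℝ × ℝ)), IsSmallCover T 𝒬 ∧ 𝒬.ncard = k}.Nonempty :=
    ⟨𝒬₀.ncard, 𝒬₀, h𝒬₀, rfl⟩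
  obtain ⟨𝒬, h𝒬, hk⟩ := Nat.sInf_mem hTne
  obtain ⟨ℛ, hℛ, hle⟩ := part1 _ ⟨𝒬, h𝒬, hk⟩
  exact le_trans (Nat.sInf_le ⟨ℛ, hℛ, rfl⟩) hle
end

section
/- Let P be a polygon with n edges (n ≥ 3) and let S be a closed axis-aligned unit square with P ∩ S ≠ ∅. Then the number of connected components of P ∩ S is at most n. -/
open Set

/-! ### Auxiliary lemmas -/

/-- A preconnected set meeting both a set and its complement meets its frontier. -/
lemma aux_cross {X : Type*} [TopologicalSpace X] {s t : Set X} (hs : IsPreconnected s)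
    (h1 : (s ∩ t).Nonempty) (h2 : (s \ t).Nonempty) : (s ∩ frontier t).Nonempty := by
  by_contra h
  rw [Set.not_nonempty_iff_eq_empty] at h
  have hsub : s ⊆ interior t ∪ (closure t)ᶜ := by
    intro z hz
    have hzf : z ∉ frontier t := fun hzf =>
      (Set.eq_empty_iff_forall_notMem.mp h z ⟨hz, hzf⟩)
    by_cases hzc : z ∈ closure t
    · rcases (closure_eq_interior_union_frontier t ▸ hzc) with h' | h'
      · exact Or.inl h'
      · exact absurd h' hzf
    · exact Or.inr hzc
  have h1' : (s ∩ interior t).Nonempty := by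
    obtain ⟨z, hzs, hzt⟩ := h1
    rcases hsub hzs with h' | h'
    · exact ⟨z, hzs, h'⟩
    · exact absurd (subset_closure hzt) h'
  have h2' : (s ∩ (closure t)ᶜ).Nonempty := by
    obtain ⟨z, hzs, hzt⟩ := h2
    rcases hsub hzs with h' | h'
    · exact absurd (interior_subset h') hzt
    · exact ⟨z, hzs, h'⟩
  obtain ⟨z, hzs, hz1, hz2⟩ :=
    hs _ _ isOpen_interior isClosed_closure.isOpen_compl hsub h1' h2'
  exact hz2 (subset_closure (interior_subset hz1))

/-- In a T2 space, connected components within a compact set are closed. -/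
lemma aux_isClosed_cci {X : Type*} [TopologicalSpace X] [T2Space X] {s : Set X}
    (hs : IsCompact s) (x : X) : IsClosed (connectedComponentIn s x) := by
  by_cases hx : x ∈ s
  · rw [connectedComponentIn_eq_image hx]
    have : CompactSpace s := isCompact_iff_compactSpace.mp hs
    exact ((isClosed_connectedComponent.isCompact).image continuous_subtype_val).isClosed
  · rw [connectedComponentIn_eq_empty hx]; exact isClosed_empty

/-- The frontier of a closed set which is the closure of its interior has no
isolated points (in the plane). -/
lemma aux_acc {P : Set (ℝ × ℝ)} (hcl : IsClosed P) (hins : P = closure (interior P))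
    {x : ℝ × ℝ} (hx : x ∈ frontier P) {ε : ℝ} (hε : 0 < ε) :
    ∃ z ∈ frontier P, z ≠ x ∧ dist z x < ε := by
  by_contra hcon
  push_neg at hcon
  have hbf : ∀ z ∈ Metric.ball x ε, z ∈ frontier P → z = x := by
    intro z hzb hzf
    by_contra hne
    exact absurd (hcon z hzf hne) (not_le.mpr (Metric.mem_ball.mp hzb))
  have hxP : x ∈ P := hcl.frontier_subset hx
  have hxi : x ∉ interior P := by
    rw [hcl.frontier_eq] at hx
    exact hx.2
  have hxcl : x ∈ closure (interior P) := hins ▸ hxP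
  obtain ⟨w, hwb, hwi⟩ :=
    mem_closure_iff.mp hxcl (Metric.ball x ε) Metric.isOpen_ball (Metric.mem_ball_self hε)
  by_cases hext : (Metric.ball x ε ∩ Pᶜ).Nonempty
  · obtain ⟨u, hub, huP⟩ := hext
    have hxu : x ≠ u := fun h => huP (h ▸ hxP)
    obtain ⟨w', hw'b, hw'i, hw'l⟩ :
        ∃ w', w' ∈ Metric.ball x ε ∧ w' ∈ interior P ∧ w' ∉ line[ℝ, x, u] := by
      by_contra hcc
      push_neg at hcc
      obtain ⟨δ, hδ, hδsub⟩ :=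
        Metric.isOpen_iff.mp (Metric.isOpen_ball.inter isOpen_interior) w ⟨hwb, hwi⟩
      have hmem : ∀ d : ℝ × ℝ, dist (w + d) w < δ → w + d ∈ line[ℝ, x, u] := by
        intro d hd
        obtain ⟨h1, h2⟩ := hδsub (Metric.mem_ball.mpr hd)
        exact hcc (w + d) h1 h2
      have hw0 : w ∈ line[ℝ, x, u] := by
        have := hmem 0 (by simpa using hδ)
        simpa using this
      have hdir : ∀ d : ℝ × ℝ, dist (w + d) w < δ → ∃ c : ℝ, c • (x - u) = d := by
        intro d hd'
        have h1 := AffineSubspace.vsub_mem_direction (hmem d hd') hw0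
        rw [direction_affineSpan, vectorSpan_pair] at h1
        have h2 : (w + d) -ᵥ w = d := by simp [vsub_eq_sub]
        rw [h2] at h1
        simpa [Submodule.mem_span_singleton, vsub_eq_sub] using h1
      have hdist : ∀ d : ℝ × ℝ, ‖d‖ < δ → dist (w + d) w < δ := by
        intro d hd
        simpa [dist_eq_norm] using hd
      obtain ⟨c1, hc1⟩ := hdir (δ/2, 0) (hdist _ (by
        rw [Prod.norm_def]
        simp [abs_of_pos, hδ, le_of_lt, half_lt_self hδ, abs_of_nonneg (le_of_lt (half_pos hδ))]))
      obtain ⟨c2, hc2⟩ := hdir (0, δ/2) (hdist _ (by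
        rw [Prod.norm_def]
        simp [abs_of_pos, hδ, le_of_lt, half_lt_self hδ, abs_of_nonneg (le_of_lt (half_pos hδ))]))
      have e1 : c1 * (x.2 - u.2) = 0 := congrArg Prod.snd hc1
      have e2 : c1 * (x.1 - u.1) = δ/2 := congrArg Prod.fst hc1
      have e3 : c2 * (x.2 - u.2) = δ/2 := congrArg Prod.snd hc2
      have hc1ne : c1 ≠ 0 := by
        intro h; rw [h, zero_mul] at e2; exact (ne_of_gt (half_pos hδ)) e2.symm
      have hx2 : x.2 - u.2 = 0 := by
        rcases mul_eq_zero.mp e1 with h | h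
        · exact absurd h hc1ne
        · exact h
      rw [hx2, mul_zero] at e3
      exact (ne_of_gt (half_pos hδ)) e3.symm
    have hw'P : w' ∈ P := interior_subset hw'i
    have hseg : segment ℝ w' u ⊆ Metric.ball x ε :=
      (convex_ball x ε).segment_subset hw'b hub
    obtain ⟨z, hzs, hzf⟩ := aux_cross (convex_segment w' u).isPreconnected
      ⟨w', left_mem_segment ℝ w' u, hw'P⟩ ⟨u, right_mem_segment ℝ w' u, huP⟩
    have hzx : z = x := hbf z (hseg hzs) hzf
    subst hzx
    have hxline : z ∈ line[ℝ, w', u] := by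
      rw [segment_eq_image_lineMap] at hzs
      obtain ⟨t, _, rfl⟩ := hzs
      exact AffineMap.lineMap_mem_affineSpan_pair _ _ _
    have hcol : Collinear ℝ ({z, w', u} : Set (ℝ × ℝ)) :=
      collinear_insert_of_mem_affineSpan_pair hxline
    exact hw'l (hcol.mem_affineSpan_of_mem_of_ne (by simp) (by simp) (by simp) hxu)
  · have hball : Metric.ball x ε ⊆ P := by
      intro z hz
      by_contra hzP
      exact hext ⟨z, hz, hzP⟩
    exact hxi (mem_interior.mpr ⟨Metric.ball x ε, hball, Metric.isOpen_ball,
      Metric.mem_ball_self hε⟩)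

/-- Every frontier point of a polygon lies on a nondegenerate segment contained in
the frontier. -/
lemma aux_nondeg {P : Set (ℝ × ℝ)} (hP : IsPolygon P) {x : ℝ × ℝ} (hx : x ∈ frontier P) :
    ∃ p q : ℝ × ℝ, p ≠ q ∧ x ∈ segment ℝ p q ∧ segment ℝ p q ⊆ frontier P := by
  classical
  obtain ⟨hcomp, hint, hins, m, f, g, hfg⟩ := hP
  set U : Set (ℝ × ℝ) := ⋃ i ∈ {i : Fin m | f i ≠ g i}, segment ℝ (f i) (g i) with hU
  have hsegcompact : ∀ p q : ℝ × ℝ, IsCompact (segment ℝ p q) := by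
    intro p q
    rw [segment_eq_image_lineMap]
    exact isCompact_Icc.image AffineMap.lineMap_continuous
  have hUclosed : IsClosed U := by
    apply Set.Finite.isClosed_biUnion (Set.toFinite _)
    intro i _
    exact (hsegcompact _ _).isClosed
  by_cases hxU : x ∈ U
  · obtain ⟨i, hi, hxi⟩ := mem_iUnion₂.mp hxU
    refine ⟨f i, g i, hi, hxi, ?_⟩
    rw [hfg]
    exact subset_iUnion (fun j => segment ℝ (f j) (g j)) i
  · exfalso
    have hsub : frontier P \ {x} ⊆ U ∪ ((f '' {i | f i = g i}) \ {x}) := by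
      rintro z ⟨hz, hzx⟩
      rw [hfg] at hz
      obtain ⟨i, hi⟩ := mem_iUnion.mp hz
      by_cases hfi : f i = g i
      · right
        refine ⟨⟨i, hfi, ?_⟩, hzx⟩
        rw [← hfi, segment_same] at hi
        exact hi.symm
      · exact Or.inl (mem_biUnion hfi hi)
    have hclosure : x ∈ closure (frontier P \ {x}) := by
      rw [mem_closure_iff]
      intro o ho hxo
      obtain ⟨ε, hε, hsubo⟩ := Metric.isOpen_iff.mp ho x hxo
      obtain ⟨z, hzf, hzx, hzd⟩ := aux_acc hcomp.isClosed hins hx hε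
      exact ⟨z, hsubo (Metric.mem_ball.mpr hzd), hzf, hzx⟩
    have hfin : ((f '' {i | f i = g i}) \ {x}).Finite :=
      ((Set.toFinite _).image f).diff
    have hcl2 : closure (frontier P \ {x}) ⊆ U ∪ ((f '' {i | f i = g i}) \ {x}) :=
      closure_minimal hsub (hUclosed.union hfin.isClosed)
    rcases hcl2 hclosure with h | h
    · exact hxU h
    · exact h.2 rfl

/-- Every frontier point of a polygon lies on an edge. -/
lemma aux_exists_edge {P : Set (ℝ × ℝ)} (hP : IsPolygon P) {x : ℝ × ℝ}
    (hx : x ∈ frontier P) : ∃ E, IsEdge P E ∧ x ∈ E := by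
  obtain ⟨p, q, hpq, hxpq, hpqf⟩ := aux_nondeg hP hx
  set φ : ℝ →ᵃ[ℝ] ℝ × ℝ := AffineMap.lineMap p q with hφ
  have hinj : Function.Injective φ := AffineMap.lineMap_injective ℝ hpq
  set T : Set ℝ := φ ⁻¹' (frontier P) with hT
  have hfrsub : frontier P ⊆ P := hP.1.isClosed.frontier_subset
  have hTclosed : IsClosed T :=
    IsClosed.preimage AffineMap.lineMap_continuous isClosed_frontier
  have hdistpq : (0:ℝ) < dist p q := dist_pos.mpr hpq
  have hTbdd : Bornology.IsBounded T := by
    obtain ⟨r, hr⟩ := (hP.1.isBounded.subset hfrsub).subset_closedBall p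
    have : T ⊆ Metric.closedBall (0:ℝ) (r / dist p q) := by
      intro t ht
      have h1 : φ t ∈ Metric.closedBall p r := hr ht
      have h2 : dist (φ t) p ≤ r := Metric.mem_closedBall.mp h1
      have h3 : dist (φ t) (φ 0) = dist t 0 * dist p q := by
        rw [hφ]
        simpa using AffineMap.dist_lineMap_lineMap p q t 0
      rw [Metric.mem_closedBall]
      have h4 : φ 0 = p := AffineMap.lineMap_apply_zero p q
      rw [h4] at h3
      exact (le_div_iff₀ hdistpq).mpr (by rw [← h3]; exact h2)
    exact Metric.isBounded_closedBall.subset this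
  have hT01 : Icc (0:ℝ) 1 ⊆ T := by
    intro t ht
    have : φ t ∈ segment ℝ p q := by
      rw [segment_eq_image_lineMap]
      exact mem_image_of_mem _ ht
    exact hpqf this
  set C := connectedComponentIn T 0 with hC
  have hCsub : C ⊆ T := connectedComponentIn_subset T 0
  have h01C : Icc (0:ℝ) 1 ⊆ C :=
    isPreconnected_Icc.subset_connectedComponentIn ⟨le_refl 0, zero_le_one⟩ hT01
  have hCclosed : IsClosed C :=
    aux_isClosed_cci (Metric.isCompact_of_isClosed_isBounded hTclosed hTbdd) 0
  have hCbddAbove : BddAbove C := (hTbdd.subset hCsub).bddAbove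
  have hCbddBelow : BddBelow C := (hTbdd.subset hCsub).bddBelow
  have hCne : C.Nonempty := ⟨0, h01C ⟨le_refl 0, zero_le_one⟩⟩
  set c := sInf C with hc
  set d := sSup C with hd
  have hcC : c ∈ C := hCclosed.csInf_mem hCne hCbddBelow
  have hdC : d ∈ C := hCclosed.csSup_mem hCne hCbddAbove
  have hCIcc : C = Icc c d := by
    apply Subset.antisymm
    · exact fun t ht => ⟨csInf_le hCbddBelow ht, le_csSup hCbddAbove ht⟩
    · exact (isPreconnected_connectedComponentIn.ordConnected).out hcC hdC
  have hc0 : c ≤ 0 := csInf_le hCbddBelow (h01C ⟨le_refl 0, zero_le_one⟩)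
  have h1d : (1:ℝ) ≤ d := le_csSup hCbddAbove (h01C ⟨zero_le_one, le_refl 1⟩)
  have hcd : c < d := lt_of_le_of_lt hc0 (lt_of_lt_of_le one_pos h1d)
  set E := segment ℝ (φ c) (φ d) with hE
  have hEimg : E = φ '' Icc c d := by
    rw [hE, ← image_segment, segment_eq_Icc hcd.le]
  have hIccT : Icc c d ⊆ T := hCIcc ▸ hCsub
  have hEfr : E ⊆ frontier P := by
    rw [hEimg]
    rintro z ⟨t, ht, rfl⟩
    exact hIccT ht
  have hxE : x ∈ E := by
    rw [hEimg]
    rw [segment_eq_image_lineMap] at hxpq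
    obtain ⟨t, ht, rfl⟩ := hxpq
    exact mem_image_of_mem _ (Icc_subset_Icc hc0 h1d ht)
  have hpE : p ∈ E := by
    rw [hEimg]
    exact ⟨0, ⟨hc0, zero_le_one.trans h1d⟩, AffineMap.lineMap_apply_zero p q⟩
  have hqE : q ∈ E := by
    rw [hEimg]
    exact ⟨1, ⟨hc0.trans zero_le_one, h1d⟩, AffineMap.lineMap_apply_one p q⟩
  refine ⟨E, ⟨⟨φ c, φ d, fun h => (ne_of_lt hcd) (hinj h), rfl⟩, hEfr, ?_⟩, hxE⟩
  rintro E' ⟨u, v, huv, rfl⟩ hE'f hEE'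
  have hpE' : p ∈ segment ℝ u v := hEE' hpE
  have hqE' : q ∈ segment ℝ u v := hEE' hqE
  have hpline : p ∈ line[ℝ, u, v] := by
    rw [segment_eq_image_lineMap] at hpE'
    obtain ⟨t, _, rfl⟩ := hpE'
    exact AffineMap.lineMap_mem_affineSpan_pair _ _ _
  have hqline : q ∈ line[ℝ, u, v] := by
    rw [segment_eq_image_lineMap] at hqE'
    obtain ⟨t, _, rfl⟩ := hqE'
    exact AffineMap.lineMap_mem_affineSpan_pair _ _ _
  have hcol : Collinear ℝ ({p, q, u, v} : Set (ℝ × ℝ)) :=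
    collinear_insert_insert_of_mem_affineSpan_pair hpline hqline
  have huline : u ∈ line[ℝ, p, q] :=
    hcol.mem_affineSpan_of_mem_of_ne (by simp) (by simp) (by simp) hpq
  have hvline : v ∈ line[ℝ, p, q] :=
    hcol.mem_affineSpan_of_mem_of_ne (by simp) (by simp) (by simp) hpq
  have hparam : ∀ z : ℝ × ℝ, z ∈ line[ℝ, p, q] → ∃ α : ℝ, φ α = z := by
    intro z hz
    rw [show z = (z - p) +ᵥ p by simp, vadd_left_mem_affineSpan_pair] at hz
    obtain ⟨r, hr⟩ := hz
    refine ⟨r, ?_⟩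
    rw [hφ, AffineMap.lineMap_apply, hr]
    simp
  obtain ⟨α, hα⟩ := hparam u huline
  obtain ⟨β, hβ⟩ := hparam v hvline
  have hE'img : segment ℝ u v = φ '' Icc (min α β) (max α β) := by
    rw [← hα, ← hβ, ← image_segment, segment_eq_Icc']
  have hJT : Icc (min α β) (max α β) ⊆ T := by
    intro t ht
    have : φ t ∈ segment ℝ u v := by
      rw [hE'img]; exact mem_image_of_mem _ ht
    exact hE'f this
  have h0J : (0:ℝ) ∈ Icc (min α β) (max α β) := by
    have hp2 : p ∈ φ '' Icc (min α β) (max α β) := hE'img ▸ hpE'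
    obtain ⟨t, ht, htp⟩ := hp2
    have ht0 : t = 0 := hinj (by rw [htp, hφ]; simp)
    rwa [ht0] at ht
  have hJC : Icc (min α β) (max α β) ⊆ C :=
    isPreconnected_Icc.subset_connectedComponentIn h0J hJT
  have hsub : segment ℝ u v ⊆ E := by
    rw [hE'img, hEimg]
    exact image_mono (hJC.trans hCIcc.subset)
  exact Subset.antisymm hsub hEE'

/-- If `P` is a polygon with `n ≥ 3` edges and `S` is a closed axis-aligned unit square
meeting `P`, then `P ∩ S` has at most `n` connected components. -/
theorem components_of_intersection_le_edges (P : Set (ℝ × ℝ)) (hP : IsPolygon P)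
    (n : ℕ) (hn : 3 ≤ n) (hedges : {E | IsEdge P E}.ncard = n)
    (a b : ℝ) (hne : (P ∩ UnitSquare a b).Nonempty) :
    {C | ∃ x ∈ P ∩ UnitSquare a b, C = connectedComponentIn (P ∩ UnitSquare a b) x}.Finite ∧
    {C | ∃ x ∈ P ∩ UnitSquare a b,
      C = connectedComponentIn (P ∩ UnitSquare a b) x}.ncard ≤ n := by
  classical
  set S := UnitSquare a b with hS
  have hSconv : Convex ℝ S := (convex_Icc _ _).prod (convex_Icc _ _)
  have hSclosed : IsClosed S := isClosed_Icc.prod isClosed_Icc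
  have hPclosed : IsClosed P := hP.1.isClosed
  set K := P ∩ S with hK
  have hPScomp : IsCompact K := hP.1.inter_right hSclosed
  set Comp := {C | ∃ x ∈ K, C = connectedComponentIn K x} with hComp
  have hEfin : {E | IsEdge P E}.Finite := by
    by_contra h
    have h0 : {E | IsEdge P E}.ncard = 0 := Set.Infinite.ncard h
    omega
  by_cases hall : ∀ x ∈ K, (connectedComponentIn K x ∩ frontier P).Nonempty
  · have hmap : ∀ C ∈ Comp, ∃ E, IsEdge P E ∧ E ∩ S ⊆ C ∧ (E ∩ S).Nonempty := by
      rintro C ⟨x₀, hx₀, rfl⟩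
      obtain ⟨y, hyC, hyf⟩ := hall x₀ hx₀
      obtain ⟨E, hE, hyE⟩ := aux_exists_edge hP hyf
      have hyK : y ∈ K := connectedComponentIn_subset _ _ hyC
      have hES : E ∩ S ⊆ K := fun z hz =>
        ⟨hPclosed.frontier_subset (hE.2.1 hz.1), hz.2⟩
      obtain ⟨u, v, huv, hEuv⟩ := hE.1
      have hpre : IsPreconnected (E ∩ S) := by
        rw [hEuv]; exact ((convex_segment u v).inter hSconv).isPreconnected
      have hyES : y ∈ E ∩ S := ⟨hyE, hyK.2⟩
      have hsub : E ∩ S ⊆ connectedComponentIn K y :=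
        hpre.subset_connectedComponentIn hyES hES
      rw [← connectedComponentIn_eq hyC] at hsub
      exact ⟨E, hE, hsub, ⟨y, hyES⟩⟩
    set F : Set (ℝ × ℝ) → Set (ℝ × ℝ) :=
      fun C => if h : C ∈ Comp then (hmap C h).choose else ∅ with hF
    have hFedge : ∀ C (h : C ∈ Comp),
        IsEdge P (F C) ∧ F C ∩ S ⊆ C ∧ (F C ∩ S).Nonempty := by
      intro C h
      rw [hF]
      simp only [dif_pos h]
      exact (hmap C h).choose_spec
    have himg : F '' Comp ⊆ {E | IsEdge P E} := by
      rintro _ ⟨C, hC, rfl⟩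
      exact (hFedge C hC).1
    have hinj : Set.InjOn F Comp := by
      intro C hC C' hC' hFF
      obtain ⟨z, hz⟩ := (hFedge C hC).2.2
      have hzC : z ∈ C := (hFedge C hC).2.1 hz
      have hzC' : z ∈ C' := (hFedge C' hC').2.1 (hFF ▸ hz)
      obtain ⟨x₀, hx₀, rfl⟩ := hC
      obtain ⟨x₁, hx₁, rfl⟩ := hC'
      rw [connectedComponentIn_eq hzC, connectedComponentIn_eq hzC']
    have hCompFin : Comp.Finite := Set.Finite.of_finite_image (hEfin.subset himg) hinj
    refine ⟨hCompFin, ?_⟩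
    calc Comp.ncard = (F '' Comp).ncard := (Set.ncard_image_of_injOn hinj).symm
      _ ≤ {E | IsEdge P E}.ncard := Set.ncard_le_ncard himg hEfin
      _ = n := hedges
  · push_neg at hall
    obtain ⟨x, hxK, hCf⟩ := hall
    set C := connectedComponentIn K x with hCdef
    have hxC : x ∈ C := mem_connectedComponentIn hxK
    have hCK : C ⊆ K := connectedComponentIn_subset _ _
    have hCint : C ⊆ interior P := by
      intro y hy
      have hyP : y ∈ P := (hCK hy).1
      by_contra hyi
      have hyf : y ∈ frontier P := by
        rw [hPclosed.frontier_eq]; exact ⟨hyP, hyi⟩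
      exact Set.eq_empty_iff_forall_notMem.mp hCf y ⟨hy, hyf⟩
    have hCclosed : IsClosed C := aux_isClosed_cci hPScomp x
    have key : ∀ y ∈ C, ∃ ε, 0 < ε ∧ Metric.ball y ε ∩ S ⊆ C := by
      intro y hy
      obtain ⟨ε, hε, hball⟩ :=
        Metric.mem_nhds_iff.mp (mem_interior_iff_mem_nhds.mp (hCint hy))
      refine ⟨ε, hε, ?_⟩
      have hpre : IsPreconnected (Metric.ball y ε ∩ S) :=
        ((convex_ball y ε).inter hSconv).isPreconnected
      have hsubK : Metric.ball y ε ∩ S ⊆ K := fun z hz => ⟨hball hz.1, hz.2⟩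
      have hyball : y ∈ Metric.ball y ε ∩ S := ⟨Metric.mem_ball_self hε, (hCK hy).2⟩
      have hsub := hpre.subset_connectedComponentIn hyball hsubK
      rwa [← connectedComponentIn_eq hy] at hsub
    have hSC : S ⊆ C := by
      set A : Set (ℝ × ℝ) := ⋃ (y : C), Metric.ball (y : ℝ × ℝ) (key y y.2).choose with hA
      have hAopen : IsOpen A := isOpen_iUnion (fun y => Metric.isOpen_ball)
      have hAS : A ∩ S ⊆ C := by
        rintro z ⟨hzA, hzS⟩
        obtain ⟨y, hzy⟩ := mem_iUnion.mp hzA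
        exact (key y y.2).choose_spec.2 ⟨hzy, hzS⟩
      have hCA : C ⊆ A := by
        intro y hy
        exact mem_iUnion.mpr ⟨⟨y, hy⟩, Metric.mem_ball_self (key y hy).choose_spec.1⟩
      by_contra hnot
      obtain ⟨s₀, hs₀S, hs₀C⟩ := Set.not_subset.mp hnot
      have hSpre : IsPreconnected S := hSconv.isPreconnected
      obtain ⟨z, hzS, hzA, hzC⟩ := hSpre A Cᶜ hAopen hCclosed.isOpen_compl
        (fun y hy => if h : y ∈ C then Or.inl (hCA h) else Or.inr h)
        ⟨x, hxK.2, hCA hxC⟩ ⟨s₀, hs₀S, hs₀C⟩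
      exact hzC (hAS ⟨hzA, hzS⟩)
    have hKS : K = S := Subset.antisymm inter_subset_right (hSC.trans hCK)
    have hcomp_eq : ∀ z ∈ K, connectedComponentIn K z = S := by
      intro z hz
      have hzS : z ∈ S := hKS ▸ hz
      have := hSconv.isPreconnected.connectedComponentIn hzS
      rw [hKS]
      exact this
    have hCompEq : Comp = {S} := by
      apply Subset.antisymm
      · rintro D ⟨z, hz, rfl⟩
        exact hcomp_eq z hz
      · rintro D hD
        rw [mem_singleton_iff] at hD
        subst hD
        exact ⟨x, hxK, (hcomp_eq x hxK).symm⟩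
    rw [hCompEq]
    refine ⟨finite_singleton S, ?_⟩
    rw [Set.ncard_singleton]
    omega
end

section
/- For every polyhedron P ⊆ ℝ³, the minimum cardinality of a small cover of P equals the minimum cardinality of a small partition of P. -/
open Set

/-- An axis-aligned unit cube `[a, a+1] × [b, b+1] × [c, c+1]`. -/
def UnitCube (a b c : ℝ) : Set (ℝ × ℝ × ℝ) :=
  Icc a (a + 1) ×ˢ (Icc b (b + 1) ×ˢ Icc c (c + 1))

/-- A polyhedron: a compact set `P ⊆ ℝ³` with nonempty interior that equals the closure of
its interior and whose frontier is contained in a finite union of planes. -/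
def IsPolyhedron (P : Set (ℝ × ℝ × ℝ)) : Prop :=
  IsCompact P ∧ (interior P).Nonempty ∧ P = closure (interior P) ∧
    ∃ (n : ℕ) (a : Fin n → ℝ × ℝ × ℝ) (b : Fin n → ℝ),
      (∀ i, a i ≠ 0) ∧
      frontier P ⊆ ⋃ i, {x : ℝ × ℝ × ℝ |
        (a i).1 * x.1 + (a i).2.1 * x.2.1 + (a i).2.2 * x.2.2 = b i}

/-- A small 3D piece: a nonempty compact connected set contained in some axis-aligned
unit cube. -/
def IsSmallPiece3 (Q : Set (ℝ × ℝ × ℝ)) : Prop :=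
  Q.Nonempty ∧ IsCompact Q ∧ IsConnected Q ∧ ∃ a b c : ℝ, Q ⊆ UnitCube a b c

/-- A small cover of a polyhedron `P`: a finite family of small 3D pieces, each contained
in `P`, whose union is `P`. -/
def IsSmallCover3 (P : Set (ℝ × ℝ × ℝ)) (𝒬 : Set (Set (ℝ × ℝ × ℝ))) : Prop :=
  𝒬.Finite ∧ (∀ Q ∈ 𝒬, IsSmallPiece3 Q ∧ Q ⊆ P) ∧ ⋃₀ 𝒬 = P

/-- A small partition of `P`: a small cover whose pieces have pairwise disjoint
interiors. -/
def IsSmallPartition3 (P : Set (ℝ × ℝ × ℝ)) (𝒬 : Set (Set (ℝ × ℝ × ℝ))) : Prop :=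
  IsSmallCover3 P 𝒬 ∧ 𝒬.Pairwise fun Q R => interior Q ∩ interior R = ∅

noncomputable section SmallCoverAux

abbrev E3 : Type := ℝ × ℝ × ℝ




def dot3 (a x : E3) : ℝ := a.1 * x.1 + a.2.1 * x.2.1 + a.2.2 * x.2.2

lemma isLinearMap_dot3 (a : E3) : IsLinearMap ℝ (dot3 a) := by
  constructor
  · intro x y; simp [dot3]; ring
  · intro c x; simp [dot3, smul_eq_mul]; ring

lemma continuous_dot3 (a : E3) : Continuous (dot3 a) := by
  unfold dot3; fun_prop

def plane3 (p : E3 × ℝ) : Set E3 := {x | dot3 p.1 x = p.2}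

lemma isClosed_plane3 (p : E3 × ℝ) : IsClosed (plane3 p) :=
  isClosed_eq (continuous_dot3 p.1) continuous_const

lemma interior_plane3 {p : E3 × ℝ} (h : p.1 ≠ 0) : interior (plane3 p) = ∅ := by
  by_contra hne
  obtain ⟨x, hx⟩ := nonempty_iff_ne_empty.2 hne
  obtain ⟨ε, hε, hball⟩ := Metric.isOpen_iff.1 isOpen_interior x hx
  set a := p.1 with ha
  have hK : 0 < a.1 ^ 2 + a.2.1 ^ 2 + a.2.2 ^ 2 := by
    have hcomp : ¬ (a.1 = 0 ∧ a.2.1 = 0 ∧ a.2.2 = 0) := by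
      rintro ⟨h1, h2, h3⟩
      apply h
      have : a = (a.1, a.2.1, a.2.2) := rfl
      rw [this, h1, h2, h3]; rfl
    by_contra hK
    push_neg at hK
    have h1 : a.1 = 0 := by nlinarith [sq_nonneg a.1, sq_nonneg a.2.1, sq_nonneg a.2.2]
    have h2 : a.2.1 = 0 := by nlinarith [sq_nonneg a.1, sq_nonneg a.2.1, sq_nonneg a.2.2]
    have h3 : a.2.2 = 0 := by nlinarith [sq_nonneg a.1, sq_nonneg a.2.1, sq_nonneg a.2.2]
    exact hcomp ⟨h1, h2, h3⟩
  set δ := ε / (2 * (‖a‖ + 1)) with hδ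
  have hnorm : (0:ℝ) < ‖a‖ + 1 := by positivity
  have hδpos : 0 < δ := by positivity
  have hy : x + δ • a ∈ Metric.ball x ε := by
    rw [Metric.mem_ball, dist_eq_norm]
    have : x + δ • a - x = δ • a := by abel
    rw [this, norm_smul]
    simp only [Real.norm_eq_abs, abs_of_pos hδpos]
    have h1 : δ * ‖a‖ < δ * (‖a‖ + 1) := by nlinarith
    have h2 : δ * (‖a‖ + 1) = ε / 2 := by
      rw [hδ]; field_simp
    linarith
  have hmem : x + δ • a ∈ plane3 p := interior_subset (hball hy)
  have hx'' : x ∈ plane3 p := interior_subset hx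
  have hx' : dot3 a x = p.2 := hx''
  have : dot3 a (x + δ • a) = p.2 := hmem
  have hexp : dot3 a (x + δ • a) = dot3 a x + δ * (a.1 ^ 2 + a.2.1 ^ 2 + a.2.2 ^ 2) := by
    simp [dot3, Prod.fst_add, Prod.snd_add, Prod.smul_fst, Prod.smul_snd, smul_eq_mul]
    ring
  rw [hexp, hx'] at this
  nlinarith

lemma interior_finUnion_empty {ι : Type*} (s : Finset ι) (f : ι → Set E3)
    (hc : ∀ i, IsClosed (f i)) (hi : ∀ i, interior (f i) = ∅) :
    interior (⋃ i ∈ s, f i) = ∅ := by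
  classical
  induction s using Finset.induction_on with
  | empty => simp
  | insert a s hmem ih =>
    rw [Finset.set_biUnion_insert]
    ext x
    simp only [mem_empty_iff_false, iff_false]
    intro hx
    rcases eq_empty_or_nonempty (interior (f a ∪ ⋃ i ∈ s, f i) \ f a) with hcase | hcase
    · have : interior (f a ∪ ⋃ i ∈ s, f i) ⊆ f a := by
        intro y hy
        by_contra hyf
        exact (eq_empty_iff_forall_notMem.1 hcase y) ⟨hy, hyf⟩
      have : interior (f a ∪ ⋃ i ∈ s, f i) ⊆ interior (f a) := interior_maximal this isOpen_interior
      rw [hi a] at this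
      exact this hx
    · obtain ⟨y, hy1, hy2⟩ := hcase
      have hopen : IsOpen (interior (f a ∪ ⋃ i ∈ s, f i) \ f a) := isOpen_interior.sdiff (hc a)
      have hsub : interior (f a ∪ ⋃ i ∈ s, f i) \ f a ⊆ ⋃ i ∈ s, f i := by
        intro z ⟨hz1, hz2⟩
        rcases interior_subset hz1 with h | h
        · exact absurd h hz2
        · exact h
      have : y ∈ interior (⋃ i ∈ s, f i) := interior_maximal hsub hopen ⟨hy1, hy2⟩
      rw [ih] at this
      exact this

lemma subset_of_frontier_subset {O F N : Set E3} (hO : IsPreconnected O) (hON : O ∩ N = ∅)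
    (hF : IsClosed F) (hFr : frontier F ⊆ N) (hOF : (O ∩ F).Nonempty) : O ⊆ F := by
  have hsub : O ⊆ interior F ∪ Fᶜ := by
    intro x hx
    by_cases hxF : x ∈ F
    · left
      have : x ∉ frontier F := fun hfr => (eq_empty_iff_forall_notMem.1 hON x) ⟨hx, hFr hfr⟩
      rw [frontier, hF.closure_eq] at this
      by_contra hint
      exact this ⟨hxF, hint⟩
    · right; exact hxF
  have hdisj : Disjoint (interior F) (Fᶜ) := by
    rw [Set.disjoint_iff]
    intro x ⟨h1, h2⟩
    exact h2 (interior_subset h1)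
  obtain ⟨y, hyO, hyF⟩ := hOF
  have hyint : y ∈ interior F := by
    have : y ∉ frontier F := fun hfr => (eq_empty_iff_forall_notMem.1 hON y) ⟨hyO, hFr hfr⟩
    rw [frontier, hF.closure_eq] at this
    by_contra hint
    exact this ⟨hyF, hint⟩
  have := hO.subset_left_of_subset_union isOpen_interior hF.isOpen_compl hdisj hsub ⟨y, hyO, hyint⟩
  exact this.trans interior_subset




lemma rank_E3 : 1 < Module.rank ℝ E3 := by
  have h1 : Module.rank ℝ E3 = Module.rank ℝ ℝ + (Module.rank ℝ ℝ + Module.rank ℝ ℝ) := by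
    rw [rank_prod', rank_prod']
  rw [h1, Module.rank_self]
  norm_num

-- core case: 0 ∈ s
lemma isPreconnected_frontier_convex_zero {s : Set E3} (hconv : Convex ℝ s) (hop : IsOpen s)
    (hb : Bornology.IsBounded s) (h0 : (0:E3) ∈ s) : IsPreconnected (frontier s) := by
  have h𝓝 : s ∈ nhds (0:E3) := hop.mem_nhds h0
  have habs : Absorbent ℝ s := absorbent_nhds_zero h𝓝
  have hvnb : Bornology.IsVonNBounded ℝ s := NormedSpace.isVonNBounded_iff ℝ |>.2 hb
  have hfr : frontier s = {x : E3 | gauge s x = 1} := by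
    ext x
    rw [frontier, hop.interior_eq]
    constructor
    · rintro ⟨hcl, hns⟩
      have h1 : gauge s x ≤ 1 := (gauge_le_one_iff_mem_closure hconv h𝓝).2 hcl
      have heq := gauge_lt_one_eq_self_of_isOpen hconv h0 hop
      have h2 : ¬ gauge s x < 1 := by
        intro hlt
        exact hns (heq ▸ (show x ∈ {x : E3 | gauge s x < 1} from hlt))
      exact le_antisymm h1 (not_lt.1 h2)
    · intro hx
      have hx' : gauge s x = 1 := hx
      constructor
      · exact (gauge_le_one_iff_mem_closure hconv h𝓝).1 (le_of_eq hx')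
      · intro hxs
        have heq := gauge_lt_one_eq_self_of_isOpen hconv h0 hop
        have : gauge s x < 1 := by
          have : x ∈ {x : E3 | gauge s x < 1} := heq.symm ▸ hxs
          exact this
        rw [hx'] at this; exact lt_irrefl 1 this
  set g : E3 → E3 := fun v => (gauge s v)⁻¹ • v with hg
  have himg : frontier s = g '' (Metric.sphere (0:E3) 1) := by
    rw [hfr]
    apply Subset.antisymm
    · rintro x (hx : gauge s x = 1)
      have hxne : x ≠ 0 := by
        intro h; rw [h, gauge_zero] at hx; norm_num at hx
      have hnx : ‖x‖ ≠ 0 := norm_ne_zero_iff.2 hxne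
      refine ⟨‖x‖⁻¹ • x, ?_, ?_⟩
      · simp [norm_smul, inv_mul_cancel₀ hnx]
      · rw [hg]
        simp only
        rw [gauge_smul_of_nonneg (inv_nonneg.2 (norm_nonneg x)), smul_eq_mul, hx, mul_one,
          inv_inv, smul_smul, mul_inv_cancel₀ hnx, one_smul]
    · rintro _ ⟨v, hv, rfl⟩
      have hvne : v ≠ 0 := by
        intro h
        rw [Metric.mem_sphere, h] at hv
        simp at hv
      have hpos : 0 < gauge s v := (gauge_pos habs hvnb).2 hvne
      show gauge s ((gauge s v)⁻¹ • v) = 1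
      rw [gauge_smul_of_nonneg (inv_nonneg.2 hpos.le), smul_eq_mul,
        inv_mul_cancel₀ (ne_of_gt hpos)]
  rw [himg]
  have hsph : IsPreconnected (Metric.sphere (0:E3) 1) :=
    (isConnected_sphere rank_E3 0 zero_le_one).isPreconnected
  apply hsph.image
  rw [hg]; apply ContinuousOn.fun_smul
  · apply ContinuousOn.inv₀
    · exact (continuous_gauge hconv h𝓝).continuousOn
    · intro v hv
      have hvne : v ≠ 0 := by
        intro h; rw [Metric.mem_sphere, h] at hv; simp at hv
      exact ne_of_gt ((gauge_pos habs hvnb).2 hvne)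
  · exact continuousOn_id

lemma isPreconnected_frontier_convex {s : Set E3} (hconv : Convex ℝ s) (hop : IsOpen s)
    (hb : Bornology.IsBounded s) (hne : s.Nonempty) : IsPreconnected (frontier s) := by
  obtain ⟨x₀, hx₀⟩ := hne
  set t : Set E3 := (fun y => y - x₀) '' s with ht
  have htconv : Convex ℝ t := by
    have := hconv.translate (-x₀)
    rw [ht, show (fun y : E3 => y - x₀) = fun x => -x₀ + x from funext fun y => sub_eq_neg_add y x₀]
    exact this
  have htop : IsOpen t := by
    have : (fun y : E3 => y - x₀) = fun y => y + (-x₀) := by funext y; ring_nf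
    rw [ht, this]
    exact (isOpenMap_add_right (-x₀)) s hop
  have htb : Bornology.IsBounded t := by
    obtain ⟨R, hR⟩ := hb.subset_closedBall 0
    apply Bornology.IsBounded.subset (Metric.isBounded_closedBall (x := (0:E3)) (r := R + ‖x₀‖))
    rw [ht]
    rintro _ ⟨y, hy, rfl⟩
    have : ‖y‖ ≤ R := by
      have := hR hy
      simpa [Metric.mem_closedBall, dist_eq_norm] using this
    simp only [Metric.mem_closedBall, dist_eq_norm, sub_zero]
    calc ‖y - x₀‖ ≤ ‖y‖ + ‖x₀‖ := norm_sub_le _ _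
    _ ≤ R + ‖x₀‖ := by linarith
  have h0t : (0:E3) ∈ t := ⟨x₀, hx₀, by simp⟩
  have hcore := isPreconnected_frontier_convex_zero htconv htop htb h0t
  have hhom : t = (Homeomorph.addRight (-x₀)) '' s := by
    rw [ht]; ext z; simp [sub_eq_add_neg]
  have hfr : frontier t = (fun y : E3 => y - x₀) '' frontier s := by
    rw [hhom, ← Homeomorph.image_frontier]
    ext z; simp [sub_eq_add_neg]
  have himg : frontier s = (fun z : E3 => z + x₀) '' frontier t := by
    rw [hfr, ← image_comp]
    have : (fun z : E3 => z + x₀) ∘ (fun y : E3 => y - x₀) = id := by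
      funext y; simp
    rw [this, image_id]
  rw [himg]
  exact hcore.image _ (by fun_prop)



section cube
lemma isClosed_unitCube (a b c : ℝ) : IsClosed (UnitCube a b c) :=
  isClosed_Icc.prod (isClosed_Icc.prod isClosed_Icc)

lemma isCompact_unitCube (a b c : ℝ) : IsCompact (UnitCube a b c) :=
  isCompact_Icc.prod (isCompact_Icc.prod isCompact_Icc)

lemma isBounded_unitCube (a b c : ℝ) : Bornology.IsBounded (UnitCube a b c) :=
  (isCompact_unitCube a b c).isBounded

def cubePlanes (a b c : ℝ) : Fin 6 → E3 × ℝ := fun j =>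
  if j.val = 0 then (((1:ℝ),(0:ℝ),(0:ℝ)), a)
  else if j.val = 1 then (((1:ℝ),(0:ℝ),(0:ℝ)), a+1)
  else if j.val = 2 then (((0:ℝ),(1:ℝ),(0:ℝ)), b)
  else if j.val = 3 then (((0:ℝ),(1:ℝ),(0:ℝ)), b+1)
  else if j.val = 4 then (((0:ℝ),(0:ℝ),(1:ℝ)), c)
  else (((0:ℝ),(0:ℝ),(1:ℝ)), c+1)

lemma cubePlanes_ne_zero (a b c : ℝ) (j : Fin 6) : (cubePlanes a b c j).1 ≠ 0 := by
  fin_cases j <;> norm_num [cubePlanes, Prod.ext_iff]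

lemma frontier_unitCube_subset (a b c : ℝ) :
    frontier (UnitCube a b c) ⊆ ⋃ j : Fin 6, plane3 (cubePlanes a b c j) := by
  intro x hx
  have hcl : x ∈ UnitCube a b c := by
    have := frontier_subset_closure hx
    rwa [(isClosed_unitCube a b c).closure_eq] at this
  have hint : x ∉ interior (UnitCube a b c) := fun h => hx.2 h
  rw [UnitCube, interior_prod_eq, interior_prod_eq, interior_Icc, interior_Icc, interior_Icc] at hint
  obtain ⟨h1, h2, h3⟩ := hcl
  simp only [mem_prod, mem_Ioo, not_and_or, not_and, not_lt] at hint
  obtain ⟨h1a, h1b⟩ := h1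
  obtain ⟨h2a, h2b⟩ := h2
  obtain ⟨h3a, h3b⟩ := h3
  have hplane : x.1 = a ∨ x.1 = a + 1 ∨ x.2.1 = b ∨ x.2.1 = b + 1 ∨ x.2.2 = c ∨ x.2.2 = c + 1 := by
    rcases hint with (h | h) | (h | h) | (h | h)
    · exact Or.inl (le_antisymm h h1a)
    · exact Or.inr (Or.inl (le_antisymm h1b h))
    · exact Or.inr (Or.inr (Or.inl (le_antisymm h h2a)))
    · exact Or.inr (Or.inr (Or.inr (Or.inl (le_antisymm h2b h))))
    · exact Or.inr (Or.inr (Or.inr (Or.inr (Or.inl (le_antisymm h h3a)))))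
    · exact Or.inr (Or.inr (Or.inr (Or.inr (Or.inr (le_antisymm h3b h)))))
  rcases hplane with h | h | h | h | h | h
  · exact mem_iUnion.2 ⟨⟨0, by norm_num⟩, by norm_num [plane3, cubePlanes, dot3, h]⟩
  · exact mem_iUnion.2 ⟨⟨1, by norm_num⟩, by norm_num [plane3, cubePlanes, dot3, h]⟩
  · exact mem_iUnion.2 ⟨⟨2, by norm_num⟩, by norm_num [plane3, cubePlanes, dot3, h]⟩
  · exact mem_iUnion.2 ⟨⟨3, by norm_num⟩, by norm_num [plane3, cubePlanes, dot3, h]⟩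
  · exact mem_iUnion.2 ⟨⟨4, by norm_num⟩, by norm_num [plane3, cubePlanes, dot3, h]⟩
  · exact mem_iUnion.2 ⟨⟨5, by norm_num⟩, by norm_num [plane3, cubePlanes, dot3, h]⟩
end cube

section cells
variable {ι : Type} [Fintype ι] (pl : ι → E3 × ℝ)
set_option linter.unusedSectionVars false

def cell3 (σ : ι → Bool) : Set E3 :=
  ⋂ k : ι, (if σ k then {x : E3 | dot3 (pl k).1 x < (pl k).2} else {x : E3 | (pl k).2 < dot3 (pl k).1 x})

def NN : Set E3 := ⋃ k : ι, plane3 (pl k)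

lemma isOpen_cell3 (σ : ι → Bool) : IsOpen (cell3 pl σ) := by
  apply isOpen_iInter_of_finite
  intro k
  by_cases h : σ k <;> simp [h, isOpen_lt (continuous_dot3 _) continuous_const,
    isOpen_lt continuous_const (continuous_dot3 _)]

lemma convex_cell3 (σ : ι → Bool) : Convex ℝ (cell3 pl σ) := by
  apply convex_iInter
  intro k
  by_cases h : σ k <;> simp [h]
  · exact convex_halfSpace_lt (isLinearMap_dot3 _) _
  · exact convex_halfSpace_gt (isLinearMap_dot3 _) _

lemma cell3_inter_NN (σ : ι → Bool) : cell3 pl σ ∩ NN pl = ∅ := by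
  ext x
  simp only [mem_inter_iff, mem_empty_iff_false, iff_false, not_and]
  intro hx hN
  obtain ⟨k, hk⟩ := mem_iUnion.1 hN
  have hcell := mem_iInter.1 hx k
  have hpk : dot3 (pl k).1 x = (pl k).2 := hk
  by_cases h : σ k <;> simp [h] at hcell <;> rw [hpk] at hcell <;> exact lt_irrefl _ hcell

lemma cell3_disjoint {σ τ : ι → Bool} (h : σ ≠ τ) : cell3 pl σ ∩ cell3 pl τ = ∅ := by
  ext x
  simp only [mem_inter_iff, mem_empty_iff_false, iff_false, not_and]
  intro hσ hτ
  have : ∃ k, σ k ≠ τ k := by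
    by_contra hc; push_neg at hc; exact h (funext hc)
  obtain ⟨k, hk⟩ := this
  have h1 := mem_iInter.1 hσ k
  have h2 := mem_iInter.1 hτ k
  cases hσk : σ k <;> cases hτk : τ k <;> rw [hσk] at h1 hk <;> rw [hτk] at h2 hk
  · exact hk rfl
  · simp at h1 h2; exact lt_irrefl _ (h1.trans h2)
  · simp at h1 h2; exact lt_irrefl _ (h2.trans h1)
  · exact hk rfl

noncomputable def sign3 (x : E3) : ι → Bool := fun k => decide (dot3 (pl k).1 x < (pl k).2)

lemma mem_cell3_sign {x : E3} (hx : x ∉ NN pl) : x ∈ cell3 pl (sign3 pl x) := by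
  apply mem_iInter.2
  intro k
  have hne : dot3 (pl k).1 x ≠ (pl k).2 := by
    intro h; exact hx (mem_iUnion.2 ⟨k, h⟩)
  by_cases h : dot3 (pl k).1 x < (pl k).2
  · simp [sign3, h]
  · have : (pl k).2 < dot3 (pl k).1 x := lt_of_le_of_ne (not_lt.1 h) (Ne.symm hne)
    simp [sign3, h, this]

lemma frontier_cell3_subset (σ : ι → Bool) : frontier (cell3 pl σ) ⊆ NN pl := by
  intro x hx
  have hcl : x ∈ closure (cell3 pl σ) := frontier_subset_closure hx
  have hweak : ∀ k, (if σ k then dot3 (pl k).1 x ≤ (pl k).2 else (pl k).2 ≤ dot3 (pl k).1 x) := by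
    intro k
    have hsub : closure (cell3 pl σ) ⊆
        (if σ k then {y : E3 | dot3 (pl k).1 y ≤ (pl k).2} else {y : E3 | (pl k).2 ≤ dot3 (pl k).1 y}) := by
      apply closure_minimal
      · intro y hy
        have := mem_iInter.1 hy k
        by_cases h : σ k <;> simp [h] at this ⊢ <;> linarith
      · by_cases h : σ k <;> simp [h]
        · exact isClosed_le (continuous_dot3 _) continuous_const
        · exact isClosed_le continuous_const (continuous_dot3 _)
    have := hsub hcl
    by_cases h : σ k <;> simp [h] at this ⊢ <;> exact this
  have hnotcell : x ∉ cell3 pl σ := by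
    have := hx.2
    rwa [(isOpen_cell3 pl σ).interior_eq] at this
  have : ∃ k, ¬ (if σ k then dot3 (pl k).1 x < (pl k).2 else (pl k).2 < dot3 (pl k).1 x) := by
    by_contra hc
    push_neg at hc
    apply hnotcell
    apply mem_iInter.2
    intro k
    have := hc k
    by_cases h : σ k <;> simp [h] at this ⊢ <;> exact this
  obtain ⟨k, hk⟩ := this
  have hw := hweak k
  apply mem_iUnion.2
  refine ⟨k, ?_⟩
  show dot3 (pl k).1 x = (pl k).2
  by_cases h : σ k <;> simp [h] at hk hw <;> linarith

lemma closure_cell3_subset_union (σ : ι → Bool) :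
    closure (cell3 pl σ) ⊆ cell3 pl σ ∪ NN pl := by
  intro x hx
  by_cases h : x ∈ cell3 pl σ
  · exact Or.inl h
  · right
    apply frontier_cell3_subset pl σ
    exact ⟨hx, by rwa [(isOpen_cell3 pl σ).interior_eq]⟩

lemma isClosed_NN : IsClosed (NN pl) :=
  isClosed_iUnion_of_finite (fun k => isClosed_eq (continuous_dot3 _) continuous_const)

end cells

end SmallCoverAux
section Main

lemma exists_smallPartition_le (P : Set E3) (hP : IsPolyhedron P) (𝒬 : Set (Set E3))
    (hcov : IsSmallCover3 P 𝒬) : ∃ PP : Set (Set E3), IsSmallPartition3 P PP ∧ PP.ncard ≤ 𝒬.ncard := by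
  classical
  obtain ⟨hPcomp, hPint, hPcl, n₀, pa, pb, hpa, hfrP0⟩ := hP
  obtain ⟨hfin, hQ, hUn⟩ := hcov
  set m := hfin.toFinset.card with hm
  have hmn : 𝒬.ncard = m := by rw [Set.ncard_eq_toFinset_card 𝒬 hfin]
  set e := hfin.toFinset.equivFin with he
  set f : Fin m → Set E3 := fun i => (e.symm i : Set E3) with hf
  have hrange : ∀ i, f i ∈ 𝒬 := by
    intro i
    have := (e.symm i).2
    rwa [Set.Finite.mem_toFinset] at this
  have hsurj : ∀ Q ∈ 𝒬, ∃ i, f i = Q := by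
    intro Q hQ'
    refine ⟨e ⟨Q, (Set.Finite.mem_toFinset hfin).2 hQ'⟩, ?_⟩
    simp [hf]
  have hdata : ∀ i : Fin m, (f i).Nonempty ∧ IsCompact (f i) ∧ IsConnected (f i) ∧
      (∃ a b c : ℝ, f i ⊆ UnitCube a b c) ∧ f i ⊆ P := by
    intro i
    obtain ⟨⟨h1, h2, h3, h4⟩, h5⟩ := hQ (f i) (hrange i)
    exact ⟨h1, h2, h3, h4, h5⟩
  choose hne hcomp hconn hcube' hsubP using hdata
  choose A B C hcube using hcube'
  choose q hq using hne
  set cube : Fin m → Set E3 := fun i => UnitCube (A i) (B i) (C i) with hcubedef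
  set ι := (Fin n₀ ⊕ (Fin m × Fin 6)) with hι
  set pl : ι → E3 × ℝ := Sum.elim (fun k => (pa k, pb k))
    (fun ij => cubePlanes (A ij.1) (B ij.1) (C ij.1) ij.2) with hpl
  set N := NN pl with hN
  have hNcl : IsClosed N := isClosed_NN pl
  have hNint : interior N = ∅ := by
    have hrw : N = ⋃ k ∈ (Finset.univ : Finset ι), plane3 (pl k) := by
      simp [hN, NN]
    rw [hrw]
    apply interior_finUnion_empty
    · intro k; exact isClosed_plane3 _
    · intro k
      apply interior_plane3
      rcases k with k | ij
      · exact hpa k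
      · exact cubePlanes_ne_zero _ _ _ _
  have hfrP : frontier P ⊆ N := by
    intro x hx
    obtain ⟨k, hk⟩ := Set.mem_iUnion.1 (hfrP0 hx)
    exact Set.mem_iUnion.2 ⟨Sum.inl k, hk⟩
  have hfrC : ∀ i, frontier (cube i) ⊆ N := by
    intro i x hx
    obtain ⟨j, hj⟩ := Set.mem_iUnion.1 (frontier_unitCube_subset (A i) (B i) (C i) hx)
    exact Set.mem_iUnion.2 ⟨Sum.inr (i, j), hj⟩
  have hPclosed : IsClosed P := hPcomp.isClosed
  set F : Fin m → Set E3 := fun i => P ∩ cube i with hF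
  have hFclosed : ∀ i, IsClosed (F i) := fun i => hPclosed.inter (isClosed_unitCube _ _ _)
  have hqF : ∀ i, q i ∈ F i := fun i => ⟨hsubP i (hq i), hcube i (hq i)⟩
  set Z : Fin m → Set E3 := fun i => connectedComponentIn (F i) (q i) with hZ
  have hZpre : ∀ i, IsPreconnected (Z i) := fun i => isPreconnected_connectedComponentIn
  have hZq : ∀ i, q i ∈ Z i := fun i => mem_connectedComponentIn (hqF i)
  have hZF : ∀ i, Z i ⊆ F i := fun i => connectedComponentIn_subset _ _
  have hZclosed : ∀ i, IsClosed (Z i) := by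
    intro i
    have h1 : closure (Z i) ⊆ F i := closure_minimal (hZF i) (hFclosed i)
    have h2 : closure (Z i) ⊆ Z i :=
      (hZpre i).closure.subset_connectedComponentIn (subset_closure (hZq i)) h1
    exact isClosed_of_closure_subset h2
  have hfZ : ∀ i, f i ⊆ Z i := fun i =>
    (hconn i).isPreconnected.subset_connectedComponentIn (hq i)
      (fun x hx => ⟨hsubP i hx, hcube i hx⟩)
  have hcellP : ∀ σ : ι → Bool, (cell3 pl σ ∩ P).Nonempty → cell3 pl σ ⊆ P := fun σ hne' =>
    subset_of_frontier_subset (convex_cell3 pl σ).isPreconnected (cell3_inter_NN pl σ)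
      hPclosed hfrP hne'
  have hcellZ : ∀ (σ : ι → Bool) (j : Fin m), cell3 pl σ ⊆ P →
      (cell3 pl σ ∩ Z j).Nonempty → cell3 pl σ ⊆ Z j := by
    rintro σ j hsub ⟨y, hy1, hy2⟩
    have hycube : y ∈ cube j := (hZF j hy2).2
    have hsubC : cell3 pl σ ⊆ cube j :=
      subset_of_frontier_subset (convex_cell3 pl σ).isPreconnected (cell3_inter_NN pl σ)
        (isClosed_unitCube _ _ _) (hfrC j) ⟨y, hy1, hycube⟩
    have hsubF : cell3 pl σ ⊆ F j := fun z hz => ⟨hsub hz, hsubC hz⟩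
    have hcomp' : Z j = connectedComponentIn (F j) y := connectedComponentIn_eq hy2
    rw [hcomp']
    exact (convex_cell3 pl σ).isPreconnected.subset_connectedComponentIn hy1 hsubF
  have memInt : ∀ (j : Fin m) (x : E3), x ∈ Z j → x ∉ N →
      cell3 pl (sign3 pl x) ⊆ Z j ∧ x ∈ interior (Z j) := by
    intro j x hx hxN
    have hxcell : x ∈ cell3 pl (sign3 pl x) := mem_cell3_sign pl hxN
    have hP' : cell3 pl (sign3 pl x) ⊆ P := hcellP _ ⟨x, hxcell, (hZF j hx).1⟩
    have hZ' : cell3 pl (sign3 pl x) ⊆ Z j := hcellZ _ j hP' ⟨x, hxcell, hx⟩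
    exact ⟨hZ', interior_maximal hZ' (isOpen_cell3 pl _) hxcell⟩
  set R : Fin m → Set E3 := fun i => Z i \ ⋃ j : Fin m, ⋃ (_ : j < i), interior (Z j) with hR
  set S : Fin m → Set E3 := fun i => R i ∪ (Z i ∩ N) with hS
  have hRZ : ∀ i, R i ⊆ Z i := fun i => Set.diff_subset
  have hSZ : ∀ i, S i ⊆ Z i := fun i => Set.union_subset (hRZ i) Set.inter_subset_left
  have hScl : ∀ i, IsClosed (S i) := by
    intro i
    have h1 : IsClosed (R i) := (hZclosed i).sdiff
      (isOpen_iUnion fun j => isOpen_iUnion fun _ => isOpen_interior)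
    exact h1.union ((hZclosed i).inter hNcl)
  have hSsubcube : ∀ i, S i ⊆ cube i :=
    fun i => (hSZ i).trans ((hZF i).trans Set.inter_subset_right)
  have hSsubP : ∀ i, S i ⊆ P := fun i => (hSZ i).trans ((hZF i).trans Set.inter_subset_left)
  have hScomp : ∀ i, IsCompact (S i) :=
    fun i => (isCompact_unitCube (A i) (B i) (C i)).of_isClosed_subset (hScl i) (hSsubcube i)
  have hnotuniv : ∀ (i : Fin m) (T : Set E3), T ⊆ cube i → T ≠ Set.univ := by
    intro i T hsub hT
    have hmem : (A i - 1, (q i).2.1, (q i).2.2) ∈ cube i := hsub (hT ▸ Set.mem_univ _)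
    have h1 : A i ≤ A i - 1 := hmem.1.1
    linarith
  have hCoreNe : ∀ i, (Z i ∩ N).Nonempty := by
    intro i
    by_contra h
    rw [Set.not_nonempty_iff_eq_empty] at h
    have hop : Z i ⊆ interior (Z i) := by
      intro x hx
      have hxN : x ∉ N := fun hxN => (Set.eq_empty_iff_forall_notMem.1 h x) ⟨hx, hxN⟩
      exact (memInt i x hx hxN).2
    have hopen : IsOpen (Z i) := by
      have heq : Z i = interior (Z i) := Set.Subset.antisymm hop interior_subset
      rw [heq]; exact isOpen_interior
    have huniv : Z i = Set.univ := (IsClopen.eq_univ ⟨hZclosed i, hopen⟩) ⟨q i, hZq i⟩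
    exact hnotuniv i (Z i) ((hZF i).trans Set.inter_subset_right) huniv
  have hSne : ∀ i, (S i).Nonempty := fun i => (hCoreNe i).mono Set.subset_union_right
  have hRcell : ∀ (i : Fin m) (x : E3), x ∈ S i → x ∉ N → cell3 pl (sign3 pl x) ⊆ R i := by
    intro i x hxS hxN
    have hxR : x ∈ R i := by
      rcases hxS with h | h
      · exact h
      · exact absurd h.2 hxN
    have hxZ : x ∈ Z i := hxR.1
    obtain ⟨hcellsub, hxint⟩ := memInt i x hxZ hxN
    intro y hy
    refine ⟨hcellsub hy, ?_⟩
    intro hmem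
    obtain ⟨j, hji, hyint⟩ : ∃ j : Fin m, j < i ∧ y ∈ interior (Z j) := by simpa using hmem
    have hcP : cell3 pl (sign3 pl x) ⊆ P := fun z hz => (hZF i (hcellsub hz)).1
    have hcZj : cell3 pl (sign3 pl x) ⊆ Z j := hcellZ _ j hcP ⟨y, hy, interior_subset hyint⟩
    have hxZj : x ∈ Z j := hcZj (mem_cell3_sign pl hxN)
    have hxintj := (memInt j x hxZj hxN).2
    exact (hxR.2) (Set.mem_iUnion.2 ⟨j, Set.mem_iUnion.2 ⟨hji, hxintj⟩⟩)
  have hfrCell : ∀ (i : Fin m) (σ : ι → Bool), cell3 pl σ ⊆ Z i →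
      frontier (cell3 pl σ) ⊆ Z i ∩ N := by
    intro i σ hsub y hy
    refine ⟨?_, frontier_cell3_subset pl σ hy⟩
    have h1 : y ∈ closure (cell3 pl σ) := frontier_subset_closure hy
    have h2 := closure_mono hsub h1
    rwa [(hZclosed i).closure_eq] at h2
  have hfrNe : ∀ (i : Fin m) (σ : ι → Bool), (cell3 pl σ).Nonempty → cell3 pl σ ⊆ Z i →
      (frontier (cell3 pl σ)).Nonempty := by
    intro i σ hne' hsub
    rw [Set.nonempty_iff_ne_empty]
    intro h
    rcases frontier_eq_empty_iff.1 h with h' | h'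
    · exact (Set.nonempty_iff_ne_empty.1 hne') h'
    · exact hnotuniv i _ (hsub.trans ((hZF i).trans Set.inter_subset_right)) h'
  have hfrPre : ∀ (i : Fin m) (σ : ι → Bool), (cell3 pl σ).Nonempty → cell3 pl σ ⊆ Z i →
      IsPreconnected (frontier (cell3 pl σ)) := by
    intro i σ hne' hsub
    exact isPreconnected_frontier_convex (convex_cell3 pl σ) (isOpen_cell3 pl σ)
      ((isBounded_unitCube (A i) (B i) (C i)).subset
        (hsub.trans ((hZF i).trans Set.inter_subset_right))) hne'
  have hmemcl : ∀ (σ : ι → Bool), ∀ y ∈ closure (cell3 pl σ),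
      y ∈ cell3 pl σ ∨ y ∈ frontier (cell3 pl σ) := by
    intro σ y hy
    by_cases h : y ∈ cell3 pl σ
    · exact Or.inl h
    · exact Or.inr ⟨hy, by rwa [(isOpen_cell3 pl σ).interior_eq]⟩
  have hcellN : ∀ (σ : ι → Bool) (y : E3), y ∈ cell3 pl σ → y ∈ N → False := by
    intro σ y h1 h2
    exact (Set.eq_empty_iff_forall_notMem.1 (cell3_inter_NN pl σ) y) ⟨h1, h2⟩
  -- core preconnected
  have hCorePre : ∀ i : Fin m, IsPreconnected (Z i ∩ N) := by
    intro i
    have hCclosed : IsClosed (Z i ∩ N) := (hZclosed i).inter hNcl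
    rw [isPreconnected_iff_subset_of_fully_disjoint_closed hCclosed]
    intro u v hu hv hsubuv hdisj
    set A₀ := u ∩ (Z i ∩ N) with hA₀
    set B₀ := v ∩ (Z i ∩ N) with hB₀
    have hA₀cl : IsClosed A₀ := hu.inter hCclosed
    have hB₀cl : IsClosed B₀ := hv.inter hCclosed
    have hdisj₀ : Disjoint A₀ B₀ := hdisj.mono Set.inter_subset_left Set.inter_subset_left
    have hA₀N : A₀ ⊆ N := fun y hy => hy.2.2
    have hB₀N : B₀ ⊆ N := fun y hy => hy.2.2
    have hcoresub : Z i ∩ N ⊆ A₀ ∪ B₀ := by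
      intro y hy
      rcases hsubuv hy with h | h
      · exact Or.inl ⟨h, hy⟩
      · exact Or.inr ⟨h, hy⟩
    set Good : Set (ι → Bool) := {σ | (cell3 pl σ).Nonempty ∧ cell3 pl σ ⊆ Z i} with hGood
    have hfrsplit : ∀ σ ∈ Good, frontier (cell3 pl σ) ⊆ A₀ ∨ frontier (cell3 pl σ) ⊆ B₀ := by
      intro σ hσ
      have hpre := hfrPre i σ hσ.1 hσ.2
      exact (isPreconnected_iff_subset_of_fully_disjoint_closed isClosed_frontier).1 hpre
        A₀ B₀ hA₀cl hB₀cl ((hfrCell i σ hσ.2).trans hcoresub) hdisj₀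
    set GA := {σ | σ ∈ Good ∧ frontier (cell3 pl σ) ⊆ A₀} with hGA
    set GB := {σ | σ ∈ Good ∧ σ ∉ GA} with hGB
    have hGBfr : ∀ σ ∈ GB, frontier (cell3 pl σ) ⊆ B₀ := by
      intro σ hσ
      rcases hfrsplit σ hσ.1 with h | h
      · exact absurd ⟨hσ.1, h⟩ hσ.2
      · exact h
    set A' := A₀ ∪ ⋃ σ ∈ GA, closure (cell3 pl σ) with hA'
    set B' := B₀ ∪ ⋃ σ ∈ GB, closure (cell3 pl σ) with hB'
    have hA'cl : IsClosed A' :=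
      hA₀cl.union ((Set.toFinite GA).isClosed_biUnion (fun σ _ => isClosed_closure))
    have hB'cl : IsClosed B' :=
      hB₀cl.union ((Set.toFinite GB).isClosed_biUnion (fun σ _ => isClosed_closure))
    have hZsub' : Z i ⊆ A' ∪ B' := by
      intro x hx
      by_cases hxN : x ∈ N
      · rcases hcoresub ⟨hx, hxN⟩ with h | h
        · exact Or.inl (Or.inl h)
        · exact Or.inr (Or.inl h)
      · have hxcell : x ∈ cell3 pl (sign3 pl x) := mem_cell3_sign pl hxN
        have hgood : sign3 pl x ∈ Good := ⟨⟨x, hxcell⟩, (memInt i x hx hxN).1⟩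
        by_cases hga : sign3 pl x ∈ GA
        · exact Or.inl (Or.inr (Set.mem_biUnion hga (subset_closure hxcell)))
        · exact Or.inr (Or.inr (Set.mem_biUnion (show sign3 pl x ∈ GB from ⟨hgood, hga⟩)
            (subset_closure hxcell)))
    have hdisj' : Disjoint A' B' := by
      rw [Set.disjoint_left]
      rintro y (hyA | hyA) (hyB | hyB)
      · exact Set.disjoint_left.1 hdisj₀ hyA hyB
      · obtain ⟨τ, hτ, hyc⟩ := Set.mem_iUnion₂.1 hyB
        rcases hmemcl τ y hyc with h' | h'
        · exact hcellN τ y h' (hA₀N hyA)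
        · exact Set.disjoint_left.1 hdisj₀ hyA (hGBfr τ hτ h')
      · obtain ⟨σ, hσ, hyc⟩ := Set.mem_iUnion₂.1 hyA
        rcases hmemcl σ y hyc with h' | h'
        · exact hcellN σ y h' (hB₀N hyB)
        · exact Set.disjoint_left.1 hdisj₀ (hσ.2 h') hyB
      · obtain ⟨σ, hσ, hycσ⟩ := Set.mem_iUnion₂.1 hyA
        obtain ⟨τ, hτ, hycτ⟩ := Set.mem_iUnion₂.1 hyB
        have hστ : σ ≠ τ := by
          intro hEq
          exact hτ.2 (hEq ▸ hσ)
        rcases hmemcl σ y hycσ with h1 | h1 <;> rcases hmemcl τ y hycτ with h2 | h2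
        · exact (Set.eq_empty_iff_forall_notMem.1 (cell3_disjoint pl hστ) y) ⟨h1, h2⟩
        · exact hcellN σ y h1 (hB₀N (hGBfr τ hτ h2))
        · exact hcellN τ y h2 (hA₀N (hσ.2 h1))
        · exact Set.disjoint_left.1 hdisj₀ (hσ.2 h1) (hGBfr τ hτ h2)
    rcases (isPreconnected_iff_subset_of_fully_disjoint_closed (hZclosed i)).1 (hZpre i)
        A' B' hA'cl hB'cl hZsub' hdisj' with h | h
    · left
      intro y hy
      rcases h hy.1 with h' | h'
      · exact h'.1
      · obtain ⟨σ, hσ, hyc⟩ := Set.mem_iUnion₂.1 h'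
        rcases hmemcl σ y hyc with h1 | h1
        · exact absurd (hcellN σ y h1 hy.2) (fun x => x)
        · exact (hσ.2 h1).1
    · right
      intro y hy
      rcases h hy.1 with h' | h'
      · exact h'.1
      · obtain ⟨τ, hτ, hyc⟩ := Set.mem_iUnion₂.1 h'
        rcases hmemcl τ y hyc with h1 | h1
        · exact absurd (hcellN τ y h1 hy.2) (fun x => x)
        · exact (hGBfr τ hτ h1).1
  -- S preconnected
  have hSpre : ∀ i, IsPreconnected (S i) := by
    intro i
    obtain ⟨x₀, hx₀⟩ := hCoreNe i
    set 𝔉 : Set (Set E3) := insert (Z i ∩ N)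
      ((fun σ => (Z i ∩ N) ∪ closure (cell3 pl σ)) ''
        {σ : ι → Bool | (cell3 pl σ).Nonempty ∧ cell3 pl σ ⊆ R i}) with h𝔉
    have hSU : S i = ⋃₀ 𝔉 := by
      apply Set.Subset.antisymm
      · intro x hx
        by_cases hxN : x ∈ N
        · exact ⟨Z i ∩ N, Set.mem_insert _ _, ⟨hSZ i hx, hxN⟩⟩
        · have hcell := hRcell i x hx hxN
          refine ⟨(Z i ∩ N) ∪ closure (cell3 pl (sign3 pl x)),
            Set.mem_insert_iff.2 (Or.inr ⟨sign3 pl x, ⟨⟨x, mem_cell3_sign pl hxN⟩, hcell⟩, rfl⟩),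
            Or.inr (subset_closure (mem_cell3_sign pl hxN))⟩
      · intro x hx
        obtain ⟨T, hT, hxT⟩ := hx
        rcases Set.mem_insert_iff.1 hT with rfl | hT'
        · exact Or.inr hxT
        · obtain ⟨σ, hσ, rfl⟩ := hT'
          rcases hxT with h | h
          · exact Or.inr h
          · rcases hmemcl σ x h with h' | h'
            · exact Or.inl (hσ.2 h')
            · exact Or.inr (hfrCell i σ (hσ.2.trans (hRZ i)) h')
    rw [hSU]
    apply isPreconnected_sUnion x₀
    · intro T hT
      rcases Set.mem_insert_iff.1 hT with rfl | hT'
      · exact hx₀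
      · obtain ⟨σ, hσ, rfl⟩ := hT'
        exact Or.inl hx₀
    · intro T hT
      rcases Set.mem_insert_iff.1 hT with rfl | hT'
      · exact hCorePre i
      · obtain ⟨σ, hσ, rfl⟩ := hT'
        have hsubZ : cell3 pl σ ⊆ Z i := hσ.2.trans (hRZ i)
        apply IsPreconnected.union'
        · obtain ⟨y, hy⟩ := hfrNe i σ hσ.1 hsubZ
          exact ⟨y, hfrCell i σ hsubZ hy, frontier_subset_closure hy⟩
        · exact hCorePre i
        · exact ((convex_cell3 pl σ).closure).isPreconnected
  have hSconn : ∀ i, IsConnected (S i) := fun i => ⟨hSne i, hSpre i⟩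
  -- disjoint interiors
  have hdisjInt : ∀ i j : Fin m, j < i → interior (S i) ∩ interior (S j) = ∅ := by
    intro i j hji
    rw [Set.eq_empty_iff_forall_notMem]
    intro y hy
    set U := interior (S i) ∩ interior (S j) with hU
    have hUopen : IsOpen U := isOpen_interior.inter isOpen_interior
    have hUN : U ⊆ N := by
      intro z hz
      by_contra hzN
      have hzi : z ∈ S i := interior_subset hz.1
      have hzj : z ∈ S j := interior_subset hz.2
      have hzRi : z ∈ R i := by
        rcases hzi with h | h
        · exact h
        · exact absurd h.2 hzN
      have hzRj : z ∈ R j := by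
        rcases hzj with h | h
        · exact h
        · exact absurd h.2 hzN
      have hzint : z ∈ interior (Z j) := (memInt j z hzRj.1 hzN).2
      exact hzRi.2 (Set.mem_iUnion.2 ⟨j, Set.mem_iUnion.2 ⟨hji, hzint⟩⟩)
    have hsub' : U ⊆ interior N := interior_maximal hUN hUopen
    rw [hNint] at hsub'
    exact hsub' hy
  -- covering
  have hcover : (⋃ i, S i) = P := by
    apply Set.Subset.antisymm
    · exact Set.iUnion_subset (fun i => hSsubP i)
    · intro x hx
      have hx' : x ∈ ⋃₀ 𝒬 := hUn.symm ▸ hx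
      obtain ⟨Q, hQ', hxQ⟩ := hx'
      obtain ⟨i₀, rfl⟩ := hsurj Q hQ'
      have hxZ : x ∈ Z i₀ := hfZ i₀ hxQ
      set T := {i : Fin m | x ∈ Z i} with hT
      obtain ⟨i, hi, hmin⟩ := Set.exists_min_image T id (Set.toFinite T) ⟨i₀, hxZ⟩
      refine Set.mem_iUnion.2 ⟨i, Or.inl ⟨hi, ?_⟩⟩
      intro hmem
      obtain ⟨j, hji, hxint⟩ : ∃ j : Fin m, j < i ∧ x ∈ interior (Z j) := by simpa using hmem
      have hjT : x ∈ Z j := interior_subset hxint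
      exact absurd hji (not_lt.2 (hmin j hjT))
  refine ⟨Set.range S, ⟨⟨Set.finite_range S, ?_, ?_⟩, ?_⟩, ?_⟩
  · rintro T ⟨i, rfl⟩
    exact ⟨⟨hSne i, hScomp i, hSconn i, A i, B i, C i, hSsubcube i⟩, hSsubP i⟩
  · rw [Set.sUnion_range]; exact hcover
  · rintro T ⟨i, rfl⟩ T' ⟨j, rfl⟩ hne'
    have hij : i ≠ j := fun h => hne' (by rw [h])
    rcases lt_or_gt_of_ne hij with h | h
    · rw [Set.inter_comm]; exact hdisjInt j i h
    · exact hdisjInt i j h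
  · rw [hmn, ← Set.image_univ]
    calc (S '' Set.univ).ncard ≤ (Set.univ : Set (Fin m)).ncard :=
          Set.ncard_image_le Set.finite_univ
    _ = m := by rw [Set.ncard_univ]; simp

end Main

/-- For every polyhedron `P ⊆ ℝ³`, the minimum cardinality of a small cover of `P` equals
the minimum cardinality of a small partition of `P`. -/
theorem min_small_cover_eq_min_small_partition_3d
    (P : Set (ℝ × ℝ × ℝ)) (hP : IsPolyhedron P) :
    sInf {k : ℕ | ∃ 𝒬 : Set (Set (ℝ × ℝ × ℝ)), IsSmallCover3 P 𝒬 ∧ 𝒬.ncard = k} =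
    sInf {k : ℕ | ∃ 𝒬 : Set (Set (ℝ × ℝ × ℝ)), IsSmallPartition3 P 𝒬 ∧ 𝒬.ncard = k} := by
  set CS := {k : ℕ | ∃ 𝒬 : Set (Set (ℝ × ℝ × ℝ)), IsSmallCover3 P 𝒬 ∧ 𝒬.ncard = k} with hCS
  set PS := {k : ℕ | ∃ 𝒬 : Set (Set (ℝ × ℝ × ℝ)), IsSmallPartition3 P 𝒬 ∧ 𝒬.ncard = k} with hPS
  have hsub : PS ⊆ CS := by
    rintro k ⟨𝒬, h1, h2⟩
    exact ⟨𝒬, h1.1, h2⟩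
  rcases Set.eq_empty_or_nonempty CS with hCSe | hCSne
  · have hPSe : PS = ∅ := Set.eq_empty_of_subset_empty (hCSe ▸ hsub)
    rw [hCSe, hPSe]
  · obtain ⟨𝒬, hcov, hcard⟩ := Nat.sInf_mem hCSne
    obtain ⟨PP, hpart, hle⟩ := exists_smallPartition_le P hP 𝒬 hcov
    have hPPmem : PP.ncard ∈ PS := ⟨PP, hpart, rfl⟩
    apply le_antisymm
    · exact Nat.sInf_le (hsub (Nat.sInf_mem ⟨PP.ncard, hPPmem⟩))
    · exact le_trans (Nat.sInf_le hPPmem) (by rw [← hcard]; exact hle)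
end

section
/- Let C ⊆ ℝ² be a convex quadrilateral with two vertical sides lying on the lines x = a and x = a + t·d, where t is a positive integer and d > 0. For 1 ≤ j ≤ t let Sʲ = C ∩ ([a + (j−1)·d, a + j·d] × ℝ) be the j-th section of C. Then there exist translation vectors v₁, …, v_t ∈ ℝ² such that either Sʲ + v_j ⊆ Sʲ⁺¹ + v_{j+1} for all 1 ≤ j < t, or Sʲ + v_j ⊇ Sʲ⁺¹ + v_{j+1} for all 1 ≤ j < t. -/
open Set

/-- The `j`-th section of `C` (for a corridor starting at `x = a`, cut into slabs of
width `d`): the part of `C` with `x`-coordinate in `[a + (j-1)·d, a + j·d]`. -/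
def corridorSection (C : Set (ℝ × ℝ)) (a d : ℝ) (j : ℕ) : Set (ℝ × ℝ) :=
  C ∩ (Icc (a + ((j : ℝ) - 1) * d) (a + (j : ℝ) * d) ×ˢ (univ : Set ℝ))


lemma hull_char (a T y₁ y₂ y₃ y₄ : ℝ) (hT : 0 < T) (h12 : y₁ ≤ y₂) (h34 : y₃ ≤ y₄) :
    convexHull ℝ ({(a, y₁), (a, y₂), (a + T, y₃), (a + T, y₄)} : Set (ℝ × ℝ)) =
    {p : ℝ × ℝ | a ≤ p.1 ∧ p.1 ≤ a + T ∧
      y₁ + (y₃ - y₁) / T * (p.1 - a) ≤ p.2 ∧ p.2 ≤ y₂ + (y₄ - y₂) / T * (p.1 - a)} := by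
  have hT0 : T ≠ 0 := ne_of_gt hT
  apply Subset.antisymm
  · apply convexHull_min
    · intro p hp
      simp only [mem_insert_iff, mem_singleton_iff] at hp
      rcases hp with rfl | rfl | rfl | rfl
      · refine ⟨le_refl _, by linarith, by simp, by simpa using h12⟩
      · refine ⟨le_refl _, by linarith, by simpa using h12, by simp⟩
      · refine ⟨show a ≤ a + T by linarith, le_refl _, ?_, ?_⟩
        · show y₁ + (y₃ - y₁) / T * (a + T - a) ≤ y₃
          rw [add_sub_cancel_left, div_mul_cancel₀ _ hT0]; linarith
        · show y₃ ≤ y₂ + (y₄ - y₂) / T * (a + T - a)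
          rw [add_sub_cancel_left, div_mul_cancel₀ _ hT0]; linarith
      · refine ⟨show a ≤ a + T by linarith, le_refl _, ?_, ?_⟩
        · show y₁ + (y₃ - y₁) / T * (a + T - a) ≤ y₄
          rw [add_sub_cancel_left, div_mul_cancel₀ _ hT0]; linarith
        · show y₄ ≤ y₂ + (y₄ - y₂) / T * (a + T - a)
          rw [add_sub_cancel_left, div_mul_cancel₀ _ hT0]; linarith
    · intro p hp q hq u v hu hv huv
      obtain rfl : v = 1 - u := by linarith
      obtain ⟨hp1, hp2, hp3, hp4⟩ := hp
      obtain ⟨hq1, hq2, hq3, hq4⟩ := hq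
      have hu1 : u ≤ 1 := by linarith
      simp only [mem_setOf_eq, Prod.fst_add, Prod.snd_add, Prod.smul_fst, Prod.smul_snd,
        smul_eq_mul]
      refine ⟨?_, ?_, ?_, ?_⟩
      · nlinarith [mul_nonneg hu (sub_nonneg.2 hp1), mul_nonneg hv (sub_nonneg.2 hq1)]
      · nlinarith [mul_nonneg hu (sub_nonneg.2 hp2), mul_nonneg hv (sub_nonneg.2 hq2)]
      · nlinarith [mul_nonneg hu (sub_nonneg.2 hp3), mul_nonneg hv (sub_nonneg.2 hq3)]
      · nlinarith [mul_nonneg hu (sub_nonneg.2 hp4), mul_nonneg hv (sub_nonneg.2 hq4)]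
  · rintro ⟨x, y⟩ ⟨h1, h2, h3, h4⟩
    simp only at h1 h2 h3 h4
    set lam := (x - a) / T with hlam
    have hlam0 : 0 ≤ lam := div_nonneg (by linarith) hT.le
    have hlam1 : lam ≤ 1 := (div_le_one hT).2 (by linarith)
    set F := y₁ + (y₃ - y₁) / T * (x - a) with hF
    set G := y₂ + (y₄ - y₂) / T * (x - a) with hG
    have hFlam : F = (1 - lam) * y₁ + lam * y₃ := by rw [hF, hlam]; field_simp; ring
    have hGlam : G = (1 - lam) * y₂ + lam * y₄ := by rw [hG, hlam]; field_simp; ring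
    set mu := if G ≤ F then 0 else (y - F) / (G - F) with hmu
    have hmu0 : 0 ≤ mu := by
      rw [hmu]; split
      · exact le_refl 0
      · next h => exact div_nonneg (by linarith) (by linarith [lt_of_not_ge h])
    have hmu1 : mu ≤ 1 := by
      rw [hmu]; split
      · exact zero_le_one
      · next h =>
        have : F < G := lt_of_not_ge h
        exact (div_le_one (by linarith)).2 (by linarith)
    have hkey : (1 - mu) * F + mu * G = y := by
      rw [hmu]; split
      · next h => simp; linarith
      · next h =>
        have hFG : G - F ≠ 0 := by have := lt_of_not_ge h; linarith
        field_simp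
        ring
    have m1 : ((a, y₁) : ℝ × ℝ) ∈ ({(a, y₁), (a, y₂), (a + T, y₃), (a + T, y₄)} : Set (ℝ × ℝ)) := by
      simp
    have m2 : ((a, y₂) : ℝ × ℝ) ∈ ({(a, y₁), (a, y₂), (a + T, y₃), (a + T, y₄)} : Set (ℝ × ℝ)) := by
      simp
    have m3 : ((a + T, y₃) : ℝ × ℝ) ∈ ({(a, y₁), (a, y₂), (a + T, y₃), (a + T, y₄)} : Set (ℝ × ℝ)) := by
      simp
    have m4 : ((a + T, y₄) : ℝ × ℝ) ∈ ({(a, y₁), (a, y₂), (a + T, y₃), (a + T, y₄)} : Set (ℝ × ℝ)) := by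
      simp
    set L := (1 - mu) * y₁ + mu * y₂ with hL
    set R := (1 - mu) * y₃ + mu * y₄ with hR
    have hLmem : ((a, L) : ℝ × ℝ) ∈ convexHull ℝ
        ({(a, y₁), (a, y₂), (a + T, y₃), (a + T, y₄)} : Set (ℝ × ℝ)) := by
      apply (convex_convexHull ℝ _).segment_subset
        (subset_convexHull ℝ _ m1) (subset_convexHull ℝ _ m2)
      exact ⟨1 - mu, mu, by linarith, hmu0, by ring, by
        simp only [Prod.smul_mk, Prod.mk_add_mk, smul_eq_mul, Prod.mk.injEq]
        constructor <;> ring⟩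
    have hRmem : ((a + T, R) : ℝ × ℝ) ∈ convexHull ℝ
        ({(a, y₁), (a, y₂), (a + T, y₃), (a + T, y₄)} : Set (ℝ × ℝ)) := by
      apply (convex_convexHull ℝ _).segment_subset
        (subset_convexHull ℝ _ m3) (subset_convexHull ℝ _ m4)
      exact ⟨1 - mu, mu, by linarith, hmu0, by ring, by
        simp only [Prod.smul_mk, Prod.mk_add_mk, smul_eq_mul, Prod.mk.injEq]
        constructor <;> ring⟩
    apply (convex_convexHull ℝ _).segment_subset hLmem hRmem
    refine ⟨1 - lam, lam, by linarith, hlam0, by ring, ?_⟩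
    simp only [Prod.smul_mk, Prod.mk_add_mk, smul_eq_mul, Prod.mk.injEq]
    constructor
    · rw [hlam]; field_simp; ring
    · have : (1 - lam) * L + lam * R = (1 - mu) * F + mu * G := by
        rw [hL, hR, hFlam, hGlam]; ring
      rw [this, hkey]

/-- Let `C` be a convex quadrilateral with two vertical sides on the lines `x = a` and
`x = a + t·d` (`t` a positive integer, `d > 0`), and let `Sʲ` be its `j`-th section of
width `d`. Then there are translations `v₁, …, v_t` such that either
`Sʲ + v_j ⊆ Sʲ⁺¹ + v_{j+1}` for all `1 ≤ j < t`, or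
`Sʲ + v_j ⊇ Sʲ⁺¹ + v_{j+1}` for all `1 ≤ j < t`. -/

theorem sections_translation_monotone (a d : ℝ) (hd : 0 < d) (t : ℕ) (ht : 0 < t)
    (y₁ y₂ y₃ y₄ : ℝ) (hy₁₂ : y₁ ≤ y₂) (hy₃₄ : y₃ ≤ y₄)
    (C : Set (ℝ × ℝ))
    (hC : C = convexHull ℝ
      ({(a, y₁), (a, y₂), (a + (t : ℝ) * d, y₃), (a + (t : ℝ) * d, y₄)} : Set (ℝ × ℝ))) :
    ∃ v : ℕ → ℝ × ℝ,
      (∀ j : ℕ, 1 ≤ j → j < t →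
        (fun x => x + v j) '' corridorSection C a d j ⊆
          (fun x => x + v (j + 1)) '' corridorSection C a d (j + 1)) ∨
      (∀ j : ℕ, 1 ≤ j → j < t →
        (fun x => x + v (j + 1)) '' corridorSection C a d (j + 1) ⊆
          (fun x => x + v j) '' corridorSection C a d j) := by
  set T : ℝ := (t : ℝ) * d with hTdef
  have hT : 0 < T := mul_pos (by exact_mod_cast ht) hd
  set s₁ : ℝ := (y₃ - y₁) / T with hs₁
  set s₂ : ℝ := (y₄ - y₂) / T with hs₂
  have hCeq : C = {p : ℝ × ℝ | a ≤ p.1 ∧ p.1 ≤ a + T ∧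
      y₁ + s₁ * (p.1 - a) ≤ p.2 ∧ p.2 ≤ y₂ + s₂ * (p.1 - a)} := by
    rw [hC]; exact hull_char a T y₁ y₂ y₃ y₄ hT hy₁₂ hy₃₄
  have hmem : ∀ (j : ℕ) (q : ℝ × ℝ), q ∈ corridorSection C a d j ↔
      (a ≤ q.1 ∧ q.1 ≤ a + T ∧ y₁ + s₁ * (q.1 - a) ≤ q.2 ∧ q.2 ≤ y₂ + s₂ * (q.1 - a)) ∧
      a + ((j : ℝ) - 1) * d ≤ q.1 ∧ q.1 ≤ a + (j : ℝ) * d := by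
    intro j q
    rw [corridorSection, hCeq]
    simp [mem_prod, mem_Icc, and_assoc]
  clear_value T s₁ s₂
  refine ⟨fun j => (-(a + ((j : ℝ) - 1) * d), -(y₁ + s₁ * (((j : ℝ) - 1) * d))), ?_⟩
  rcases le_total s₁ s₂ with hs | hs
  · left
    intro j hj1 hjt p hp
    obtain ⟨q, hq, rfl⟩ := hp
    rw [hmem] at hq
    obtain ⟨⟨_, _, hq3, hq4⟩, hq5, hq6⟩ := hq
    have hjR : (1 : ℝ) ≤ (j : ℝ) := by exact_mod_cast hj1
    have hjtR : (j : ℝ) + 1 ≤ (t : ℝ) := by exact_mod_cast hjt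
    have h0 : 0 ≤ ((j : ℝ) - 1) * d := mul_nonneg (by linarith) hd.le
    have h1 : ((j : ℝ) + 1) * d ≤ T := by
      rw [hTdef]; exact mul_le_mul_of_nonneg_right hjtR hd.le
    have hss : 0 ≤ (s₂ - s₁) * d := mul_nonneg (by linarith) hd.le
    refine ⟨q + (d, s₁ * d), ?_, ?_⟩
    · rw [hmem]
      push_cast
      simp only [Prod.fst_add, Prod.snd_add]
      refine ⟨⟨by linarith, by linarith, by linarith, by linarith⟩, by linarith,
        by linarith⟩
    · have : ((j : ℕ) + 1 : ℕ) = j + 1 := rfl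
      refine Prod.ext ?_ ?_ <;>
        (simp only [Prod.fst_add, Prod.snd_add]; push_cast; ring)
  · right
    intro j hj1 hjt p hp
    obtain ⟨q, hq, rfl⟩ := hp
    rw [hmem] at hq
    obtain ⟨⟨_, _, hq3, hq4⟩, hq5, hq6⟩ := hq
    have hjR : (1 : ℝ) ≤ (j : ℝ) := by exact_mod_cast hj1
    have hjtR : (j : ℝ) + 1 ≤ (t : ℝ) := by exact_mod_cast hjt
    have h0 : 0 ≤ ((j : ℝ) - 1) * d := mul_nonneg (by linarith) hd.le
    have h1 : ((j : ℝ) + 1) * d ≤ T := by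
      rw [hTdef]; exact mul_le_mul_of_nonneg_right hjtR hd.le
    have hss : 0 ≤ (s₁ - s₂) * d := mul_nonneg (by linarith) hd.le
    push_cast at hq5 hq6
    refine ⟨q + (-d, -(s₁ * d)), ?_, ?_⟩
    · rw [hmem]
      simp only [Prod.fst_add, Prod.snd_add]
      refine ⟨⟨by linarith, by linarith, by linarith, by linarith⟩, by linarith,
        by linarith⟩
    · refine Prod.ext ?_ ?_ <;>
        (simp only [Prod.fst_add, Prod.snd_add]; push_cast; ring)
end
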